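/- arXiv:2508.12650 — 10 statements merged into one kernel-verified Lean document; each statement's English description precedes it below -/
import Mathlib

section
/- Under the ANM setup, for every node j ∈ V and every point x ∈ ℝ^D, the score admits the decomposition ∂_{x_j} log P(x) = (log p_j)'(x_j − f_j(x)) − ∑_{i ∈ V : j ∈ Pa(i)} (∂_{x_j} f_i(x)) · (log p_i)'(x_i − f_i(x)), where (log p_i)' denotes the derivative of the real function ε ↦ log p_i(ε). -/
open MeasureTheory Real

/-- ANM score decomposition: `∂_{x_j} log P(x) = (log p_j)'(x_j − f_j(x))
    − ∑_{i : j ∈ Pa(i)} ∂_{x_j} f_i(x) · (log p_i)'(x_i − f_i(x))`. -/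
theorem anm_score_decomposition
    (D : ℕ) (Pa : Fin D → Set (Fin D)) [∀ j i, Decidable (j ∈ Pa i)]
    (hPa : ∀ i, i ∉ Pa i)
    (p : Fin D → ℝ → ℝ)
    (hp_pos : ∀ i ε, 0 < p i ε)
    (hp_smooth : ∀ i, ContDiff ℝ 2 (p i))
    (f : Fin D → (Fin D → ℝ) → ℝ)
    (hf_smooth : ∀ i, ContDiff ℝ 2 (f i))
    (hf_dep : ∀ i j, j ∉ Pa i → ∀ (x : Fin D → ℝ) (t : ℝ),
      f i (Function.update x j t) = f i x)
    (P : (Fin D → ℝ) → ℝ)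
    (hP : ∀ x, P x = ∏ i, p i (x i - f i x))
    (S : Fin D → (Fin D → ℝ) → ℝ)
    (hS : ∀ j x, S j x = deriv (fun t => Real.log (P (Function.update x j t))) (x j))
    (j : Fin D) (x : Fin D → ℝ) :
    S j x
      = deriv (fun ε => Real.log (p j ε)) (x j - f j x)
        - ∑ i ∈ Finset.univ.filter (fun i => j ∈ Pa i),
            deriv (fun t => f i (Function.update x j t)) (x j)
              * deriv (fun ε => Real.log (p i ε)) (x i - f i x) := by
  classical
  set d : Fin D → ℝ := fun i => deriv (fun t => f i (Function.update x j t)) (x j) with hd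
  set L : Fin D → ℝ := fun i => deriv (fun ε => Real.log (p i ε)) (x i - f i x) with hL
  -- the update map is differentiable in t
  have hu_eq : (fun t : ℝ => Function.update x j t)
      = fun t => x + (t - x j) • (Pi.single j 1 : Fin D → ℝ) := by
    funext t k
    by_cases hk : k = j
    · subst hk; simp [Function.update, Pi.single]
    · simp [Function.update_of_ne hk, Pi.single_eq_of_ne hk]
  have hu_diff : ∀ t₀ : ℝ, DifferentiableAt ℝ (fun t : ℝ => Function.update x j t) t₀ := by
    intro t₀
    rw [hu_eq]
    exact (differentiableAt_const x).add
      (((differentiableAt_id.sub_const _)).smul_const _)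
  -- f i composed with update, differentiable in t
  have hfd : ∀ i, HasDerivAt (fun t => f i (Function.update x j t)) (d i) (x j) := by
    intro i
    have : DifferentiableAt ℝ (fun t => f i (Function.update x j t)) (x j) :=
      (((hf_smooth i).differentiable two_ne_zero).differentiableAt).comp (x j) (hu_diff (x j))
    exact this.hasDerivAt
  -- d i = 0 when j ∉ Pa i
  have hd0 : ∀ i, j ∉ Pa i → d i = 0 := by
    intro i hij
    have : (fun t => f i (Function.update x j t)) = fun _ => f i x := by
      funext t; exact hf_dep i j hij x t
    simp only [hd, this, deriv_const]
  -- derivative of coordinate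
  have hcoord : ∀ i, HasDerivAt (fun t => Function.update x j t i)
      (if i = j then (1:ℝ) else 0) (x j) := by
    intro i
    by_cases hij : i = j
    · subst hij
      simp only [Function.update_self, if_pos rfl]
      exact hasDerivAt_id _
    · simp only [if_neg hij]
      have : (fun t => Function.update x j t i) = fun _ => x i := by
        funext t; exact Function.update_of_ne hij t x
      rw [this]; exact hasDerivAt_const _ _
  have hux : Function.update x j (x j) = x := Function.update_eq_self j x
  -- log ∘ p i differentiable
  have hlog : ∀ i, HasDerivAt (fun ε => Real.log (p i ε)) (L i) (x i - f i x) := by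
    intro i
    have : DifferentiableAt ℝ (fun ε => Real.log (p i ε)) (x i - f i x) :=
      (((hp_smooth i).differentiable two_ne_zero).differentiableAt).log (hp_pos i _).ne'
    exact this.hasDerivAt
  -- each summand
  have hterm : ∀ i, HasDerivAt
      (fun t => Real.log (p i (Function.update x j t i - f i (Function.update x j t))))
      (L i * ((if i = j then (1:ℝ) else 0) - d i)) (x j) := by
    intro i
    have hinner : HasDerivAt (fun t => Function.update x j t i - f i (Function.update x j t))
        ((if i = j then (1:ℝ) else 0) - d i) (x j) := (hcoord i).sub (hfd i)
    have hlog' : HasDerivAt (fun ε => Real.log (p i ε)) (L i)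
        (Function.update x j (x j) i - f i (Function.update x j (x j))) := by
      rw [hux]; exact hlog i
    exact hlog'.comp (x j) hinner
  -- sum
  have hsum : HasDerivAt
      (fun t => ∑ i, Real.log (p i (Function.update x j t i - f i (Function.update x j t))))
      (∑ i, L i * ((if i = j then (1:ℝ) else 0) - d i)) (x j) :=
    HasDerivAt.fun_sum (fun i _ => hterm i)
  -- rewrite log P
  have hfun : (fun t => Real.log (P (Function.update x j t)))
      = fun t => ∑ i, Real.log (p i (Function.update x j t i - f i (Function.update x j t))) := by
    funext t
    rw [hP]
    exact Real.log_prod (fun i _ => (hp_pos i _).ne')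
  have hSval : S j x = ∑ i, L i * ((if i = j then (1:ℝ) else 0) - d i) := by
    rw [hS, hfun]; exact hsum.deriv
  rw [hSval]
  have h1 : ∑ i, L i * ((if i = j then (1:ℝ) else 0) - d i)
      = (∑ i, L i * (if i = j then (1:ℝ) else 0)) - ∑ i, d i * L i := by
    rw [← Finset.sum_sub_distrib]
    congr 1; funext i; ring
  rw [h1]
  have h2 : (∑ i, L i * (if i = j then (1:ℝ) else 0)) = L j := by
    rw [Finset.sum_eq_single j]
    · simp
    · intro i _ hij; simp [hij]
    · intro h; exact absurd (Finset.mem_univ j) h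
  have h3 : ∑ i ∈ Finset.univ.filter (fun i => j ∈ Pa i), d i * L i = ∑ i, d i * L i := by
    apply Finset.sum_filter_of_ne
    intro i _ hne
    by_contra hj
    exact hne (by rw [hd0 i hj]; ring)
  rw [h2, ← h3]
end

section
/- Under the ANM setup, if l ∈ V is a leaf, then for every x ∈ ℝ^D the score in the l-th coordinate equals the noise score: S_l(x) = ∂_{x_l} log P(x) = (log p_l)'(x_l − f_l(x)). -/
open MeasureTheory Real

/-- ANM leaf score: if `l` is a leaf, then `S_l(x) = (log p_l)'(x_l − f_l(x))`. -/
theorem anm_leaf_score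
    (D : ℕ) (Pa : Fin D → Set (Fin D))
    (hPa : ∀ i, i ∉ Pa i)
    (p : Fin D → ℝ → ℝ)
    (hp_pos : ∀ i ε, 0 < p i ε)
    (hp_smooth : ∀ i, ContDiff ℝ 2 (p i))
    (f : Fin D → (Fin D → ℝ) → ℝ)
    (hf_smooth : ∀ i, ContDiff ℝ 2 (f i))
    (hf_dep : ∀ i j, j ∉ Pa i → ∀ (x : Fin D → ℝ) (t : ℝ),
      f i (Function.update x j t) = f i x)
    (P : (Fin D → ℝ) → ℝ)
    (hP : ∀ x, P x = ∏ i, p i (x i - f i x))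
    (S : Fin D → (Fin D → ℝ) → ℝ)
    (hS : ∀ j x, S j x = deriv (fun t => Real.log (P (Function.update x j t))) (x j))
    (l : Fin D) (hleaf : ∀ i, l ∉ Pa i)
    (x : Fin D → ℝ) :
    S l x = deriv (fun ε => Real.log (p l ε)) (x l - f l x) := by
  set c := f l x with hc
  set C := ∏ i ∈ Finset.univ.erase l, p i (x i - f i x) with hC
  have hCpos : 0 < C := Finset.prod_pos (fun i _ => hp_pos i _)
  have hfu : ∀ (i : Fin D) (t : ℝ), f i (Function.update x l t) = f i x :=
    fun i t => hf_dep i l (hleaf i) x t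
  have hPu : ∀ t : ℝ, P (Function.update x l t) = p l (t - c) * C := by
    intro t
    rw [hP]
    rw [← Finset.mul_prod_erase Finset.univ _ (Finset.mem_univ l)]
    congr 1
    · rw [hfu l t, Function.update_self]
    · apply Finset.prod_congr rfl
      intro i hi
      rw [hfu i t, Function.update_of_ne (Finset.ne_of_mem_erase hi)]
  have hlog : ∀ t : ℝ, Real.log (P (Function.update x l t))
      = Real.log (p l (t - c)) + Real.log C := by
    intro t
    rw [hPu t, Real.log_mul (ne_of_gt (hp_pos l _)) (ne_of_gt hCpos)]
  have hdiff : ∀ t : ℝ, DifferentiableAt ℝ (fun t => Real.log (p l (t - c))) t := by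
    intro t
    have h1 : DifferentiableAt ℝ (fun t : ℝ => p l (t - c)) t :=
      (((hp_smooth l).differentiable (by norm_num)).differentiableAt).comp t
        ((differentiable_id.sub_const c).differentiableAt)
    exact h1.log (ne_of_gt (hp_pos l _))
  rw [hS]
  have : (fun t => Real.log (P (Function.update x l t)))
      = fun t => Real.log (p l (t - c)) + Real.log C := funext hlog
  rw [this, deriv_add_const]
  exact deriv_comp_sub_const (f := fun ε => Real.log (p l ε)) (a := c) (x := x l)
end

section
/- Under the ANM setup, if l ∈ V is a leaf, j ∈ V with j ≠ l, and x ∈ ℝ^D satisfies (log p_l)''(x_l − f_l(x)) ≠ 0, then the residue term of the deciduous score satisfies the identity (∂_{x_j} S_l(x)) · S_l(x) / (∂_{x_l} S_l(x)) = −(∂_{x_j} f_l(x)) · (log p_l)'(x_l − f_l(x)). -/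
open MeasureTheory Real

/-- ANM residue identity: if `l` is a leaf, `j ≠ l`, and
    `(log p_l)''(x_l − f_l(x)) ≠ 0`, then
    `∂_{x_j} S_l(x) · S_l(x) / ∂_{x_l} S_l(x) = −∂_{x_j} f_l(x) · (log p_l)'(x_l − f_l(x))`. -/
theorem anm_residue_identity
    (D : ℕ) (Pa : Fin D → Set (Fin D))
    (hPa : ∀ i, i ∉ Pa i)
    (p : Fin D → ℝ → ℝ)
    (hp_pos : ∀ i ε, 0 < p i ε)
    (hp_smooth : ∀ i, ContDiff ℝ 2 (p i))
    (f : Fin D → (Fin D → ℝ) → ℝ)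
    (hf_smooth : ∀ i, ContDiff ℝ 2 (f i))
    (hf_dep : ∀ i j, j ∉ Pa i → ∀ (x : Fin D → ℝ) (t : ℝ),
      f i (Function.update x j t) = f i x)
    (P : (Fin D → ℝ) → ℝ)
    (hP : ∀ x, P x = ∏ i, p i (x i - f i x))
    (S : Fin D → (Fin D → ℝ) → ℝ)
    (hS : ∀ j x, S j x = deriv (fun t => Real.log (P (Function.update x j t))) (x j))
    (l : Fin D) (hleaf : ∀ i, l ∉ Pa i)
    (j : Fin D) (hjl : j ≠ l)
    (x : Fin D → ℝ)
    (hcurv : deriv (deriv (fun e => Real.log (p l e))) (x l - f l x) ≠ 0) :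
    deriv (fun t => S l (Function.update x j t)) (x j) * S l x
        / deriv (fun t => S l (Function.update x l t)) (x l)
      = -(deriv (fun t => f l (Function.update x j t)) (x j))
          * deriv (fun e => Real.log (p l e)) (x l - f l x) := by
  set g : ℝ → ℝ := fun e => Real.log (p l e) with hg_def
  have hg : ContDiff ℝ 2 g :=
    (hp_smooth l).log (fun e => (hp_pos l e).ne')
  have hg1 : ContDiff ℝ 1 (deriv g) := by
    have := (contDiff_succ_iff_deriv (n := 1)).mp hg
    exact this.2.2
  have hg'diff : Differentiable ℝ (deriv g) := hg1.differentiable one_ne_zero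
  -- f i does not depend on coordinate l
  have hfl : ∀ i (y : Fin D → ℝ) (t : ℝ), f i (Function.update y l t) = f i y :=
    fun i y t => hf_dep i l (hleaf i) y t
  -- key: S l y = (log p_l)' (y l - f l y)
  have hSl : ∀ y : Fin D → ℝ, S l y = deriv g (y l - f l y) := by
    intro y
    rw [hS]
    have hfun : (fun t => Real.log (P (Function.update y l t))) =
        fun t => g (t - f l y) +
          Real.log (∏ i ∈ {l}ᶜ, p i (y i - f i y)) := by
      funext t
      rw [hP]
      have hprod : (∏ i, p i (Function.update y l t i - f i (Function.update y l t)))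
          = p l (t - f l y) * ∏ i ∈ {l}ᶜ, p i (y i - f i y) := by
        rw [Fintype.prod_eq_mul_prod_compl l]
        congr 1
        · rw [Function.update_self, hfl]
        · apply Finset.prod_congr rfl
          intro i hi
          simp only [Finset.mem_compl, Finset.mem_singleton] at hi
          rw [Function.update_of_ne hi, hfl]
      rw [hprod, Real.log_mul (hp_pos l _).ne'
        (Finset.prod_pos (fun i _ => hp_pos i _)).ne']
    rw [hfun]
    rw [deriv_add_const, deriv_comp_sub_const]
  -- the map t ↦ f l (update x j t)
  set φ : ℝ → ℝ := fun t => f l (Function.update x j t) with hφ_def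
  have hupd : Differentiable ℝ (fun t : ℝ => Function.update x j t) := by
    apply differentiable_pi.mpr
    intro i
    by_cases hij : i = j
    · subst hij
      simp only [Function.update_self]
      exact differentiable_id
    · simp only [Function.update_of_ne hij]
      exact differentiable_const _
  have hφdiff : Differentiable ℝ φ :=
    ((hf_smooth l).differentiable (by norm_num)).comp hupd
  set d : ℝ := deriv φ (x j) with hd_def
  have hφ : HasDerivAt φ d (x j) := hφdiff.differentiableAt.hasDerivAt
  have hφx : φ (x j) = f l x := by rw [hφ_def]; simp [Function.update_eq_self]
  set c : ℝ := x l - f l x with hc_def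
  -- derivative in direction l
  have hDl : deriv (fun t => S l (Function.update x l t)) (x l) = deriv (deriv g) c := by
    have : (fun t => S l (Function.update x l t)) = fun t => deriv g (t - f l x) := by
      funext t
      rw [hSl, Function.update_self, hfl]
    rw [this, deriv_comp_sub_const]
  -- derivative in direction j
  have hDj : deriv (fun t => S l (Function.update x j t)) (x j)
      = deriv (deriv g) c * (-d) := by
    have heq : (fun t => S l (Function.update x j t)) = fun t => deriv g (x l - φ t) := by
      funext t
      rw [hSl, Function.update_of_ne (Ne.symm hjl)]
    rw [heq]
    have hinner : HasDerivAt (fun t => x l - φ t) (-d) (x j) := by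
      exact hφ.const_sub (x l)
    have houter : HasDerivAt (deriv g) (deriv (deriv g) c) (x l - φ (x j)) := by
      rw [hφx]
      exact (hg'diff c).hasDerivAt
    exact (houter.comp (x j) hinner).deriv
  rw [hDl, hDj, hSl]
  rw [hφx] at *
  have hcurv' : deriv (deriv g) c ≠ 0 := hcurv
  field_simp
  ring
end

section
/- Under the ANM setup, if l ∈ V is a leaf, j ∈ V with j ≠ l, and x ∈ ℝ^D satisfies (log p_l)''(x_l − f_l(x)) ≠ 0, then the score of the marginalized density can be expressed entirely in terms of the full score and its derivatives: ∂_{x_j} log P_{-l}(x) = S_j(x) − (∂_{x_j} S_l(x)) · S_l(x) / (∂_{x_l} S_l(x)), where P_{-l}(x) = ∏_{i ≠ l} p_i(x_i − f_i(x)). -/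
open MeasureTheory Real

/-- ANM deciduous score (score form): if `l` is a leaf, `j ≠ l`, and
    `(log p_l)''(x_l − f_l(x)) ≠ 0`, then
    `∂_{x_j} log P_{-l}(x) = S_j(x) − ∂_{x_j} S_l(x) · S_l(x) / ∂_{x_l} S_l(x)`. -/
theorem anm_deciduous_score_via_score
    (D : ℕ) (Pa : Fin D → Set (Fin D))
    (hPa : ∀ i, i ∉ Pa i)
    (p : Fin D → ℝ → ℝ)
    (hp_pos : ∀ i ε, 0 < p i ε)
    (hp_smooth : ∀ i, ContDiff ℝ 2 (p i))
    (f : Fin D → (Fin D → ℝ) → ℝ)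
    (hf_smooth : ∀ i, ContDiff ℝ 2 (f i))
    (hf_dep : ∀ i j, j ∉ Pa i → ∀ (x : Fin D → ℝ) (t : ℝ),
      f i (Function.update x j t) = f i x)
    (P : (Fin D → ℝ) → ℝ)
    (hP : ∀ x, P x = ∏ i, p i (x i - f i x))
    (S : Fin D → (Fin D → ℝ) → ℝ)
    (hS : ∀ j x, S j x = deriv (fun t => Real.log (P (Function.update x j t))) (x j))
    (l : Fin D) (hleaf : ∀ i, l ∉ Pa i)
    (Pml : (Fin D → ℝ) → ℝ)
    (hPml : ∀ x, Pml x = ∏ i ∈ Finset.univ.erase l, p i (x i - f i x))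
    (j : Fin D) (hjl : j ≠ l)
    (x : Fin D → ℝ)
    (hcurv : deriv (deriv (fun e => Real.log (p l e))) (x l - f l x) ≠ 0) :
    deriv (fun t => Real.log (Pml (Function.update x j t))) (x j)
      = S j x - deriv (fun t => S l (Function.update x j t)) (x j) * S l x
          / deriv (fun t => S l (Function.update x l t)) (x l) := by
  have hp_diff : ∀ i, Differentiable ℝ (p i) := fun i => (hp_smooth i).differentiable two_ne_zero
  have hf_diff : ∀ i, Differentiable ℝ (f i) := fun i => (hf_smooth i).differentiable two_ne_zero
  set L : ℝ → ℝ := fun e => Real.log (p l e) with hLdef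
  have hL : ContDiff ℝ 2 L := (hp_smooth l).log (fun e => (hp_pos l e).ne')
  have hL1 : Differentiable ℝ L := hL.differentiable two_ne_zero
  have hL2 : Differentiable ℝ (deriv L) := by
    have h2 : ContDiff ℝ (1 + 1) L := by
      rw [show ((1:WithTop ℕ∞) + 1) = 2 by norm_num]; exact hL
    rw [contDiff_succ_iff_deriv] at h2
    exact h2.2.2.differentiable one_ne_zero
  set c : ℝ → (Fin D → ℝ) := fun t => Function.update x j t with hcdef
  have hcx : c (x j) = x := Function.update_eq_self j x
  have hc_deriv : HasDerivAt c (Pi.single j (1 : ℝ)) (x j) := by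
    rw [hasDerivAt_pi]
    intro i
    by_cases h : i = j
    · subst h
      simp only [hcdef, Function.update_self, Pi.single_eq_same]
      exact hasDerivAt_id _
    · simp only [hcdef, Function.update_of_ne h, Pi.single_eq_of_ne h]
      exact hasDerivAt_const _ _
  have hcl : ∀ t, c t l = x l := fun t => Function.update_of_ne (Ne.symm hjl) _ _
  have hPml_pos : ∀ y, 0 < Pml y := by
    intro y; rw [hPml]; exact Finset.prod_pos fun i _ => hp_pos i _
  -- derivative of f i ∘ c
  have hfic : ∀ i, HasDerivAt (fun t => f i (c t))
      ((fderiv ℝ (f i) x) (Pi.single j (1 : ℝ))) (x j) := by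
    intro i
    have h1 : HasFDerivAt (f i) (fderiv ℝ (f i) x) (c (x j)) := by
      rw [hcx]; exact (hf_diff i x).hasFDerivAt
    exact h1.comp_hasDerivAt (x j) hc_deriv
  set Dval : ℝ := (fderiv ℝ (f l) x) (Pi.single j (1 : ℝ)) with hDdef
  set u : ℝ := x l - f l x with hudef
  set K : ℝ := deriv (deriv L) u with hKdef
  have hK : K ≠ 0 := hcurv
  -- score at l formula: S l y = (log p_l)' (y l - f l y)
  have hSl : ∀ y : Fin D → ℝ, S l y = deriv L (y l - f l y) := by
    intro y
    rw [hS]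
    have hfun : (fun t => Real.log (P (Function.update y l t)))
        = fun t => L (t - f l y) + Real.log (Pml y) := by
      funext t
      have hfinv : ∀ i, f i (Function.update y l t) = f i y :=
        fun i => hf_dep i l (hleaf i) y t
      rw [hP, ← Finset.mul_prod_erase Finset.univ _ (Finset.mem_univ l)]
      have hprod : ∏ i ∈ Finset.univ.erase l,
            p i (Function.update y l t i - f i (Function.update y l t))
          = Pml y := by
        rw [hPml]
        refine Finset.prod_congr rfl fun i hi => ?_
        rw [hfinv i, Function.update_of_ne (Finset.ne_of_mem_erase hi)]
      rw [hprod, Real.log_mul (hp_pos l _).ne' (hPml_pos y).ne', hfinv l,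
        Function.update_self]
    rw [hfun, deriv_add_const, deriv_comp_sub_const]
  -- denominator: ∂_l S_l x = K
  have hdenom : deriv (fun t => S l (Function.update x l t)) (x l) = K := by
    have hfun : (fun t => S l (Function.update x l t)) = fun t => deriv L (t - f l x) := by
      funext t
      rw [hSl, Function.update_self, hf_dep l l (hPa l)]
    rw [hfun, deriv_comp_sub_const]
  -- numerator: ∂_j S_l x
  have hinner : HasDerivAt (fun t => x l - f l (c t)) (0 - Dval) (x j) :=
    (hasDerivAt_const (x j) (x l)).sub (hfic l)
  have hnum : HasDerivAt (fun t => S l (c t)) (K * (0 - Dval)) (x j) := by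
    have hfun : (fun t => S l (c t)) = fun t => deriv L (x l - f l (c t)) := by
      funext t; rw [hSl, hcl t]
    rw [hfun]
    have hout : HasDerivAt (deriv L) K (x l - f l (c (x j))) := by
      rw [hcx]; exact (hL2 u).hasDerivAt
    exact hout.comp (x j) hinner
  -- A :=  t ↦ L (x l - f l (c t))
  have hA : HasDerivAt (fun t => L (x l - f l (c t))) (deriv L u * (0 - Dval)) (x j) := by
    have hout : HasDerivAt L (deriv L u) (x l - f l (c (x j))) := by
      rw [hcx]; exact (hL1 _).hasDerivAt
    exact hout.comp (x j) hinner
  -- B := t ↦ log (Pml (c t)) is differentiable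
  have hBdiff : DifferentiableAt ℝ (fun t => Real.log (Pml (c t))) (x j) := by
    have hPmlc : DifferentiableAt ℝ (fun t => Pml (c t)) (x j) := by
      have hfun : (fun t => Pml (c t))
          = fun t => ∏ i ∈ Finset.univ.erase l, p i (c t i - f i (c t)) := by
        funext t; rw [hPml]
      rw [hfun]
      refine DifferentiableAt.fun_finsetProd fun i _ => ?_
      have hi := ((hasDerivAt_pi.1 hc_deriv) i).sub (hfic i)
      exact ((hp_diff i _).comp (x j) hi.differentiableAt :
        DifferentiableAt ℝ (fun t => p i (c t i - f i (c t))) (x j))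
    exact hPmlc.log (hPml_pos _).ne'
  -- split: log P (c t) = L (x l - f l (c t)) + log (Pml (c t))
  have hsplit : (fun t => Real.log (P (c t)))
      = fun t => L (x l - f l (c t)) + Real.log (Pml (c t)) := by
    funext t
    rw [hP, ← Finset.mul_prod_erase Finset.univ _ (Finset.mem_univ l), ← hPml,
      Real.log_mul (hp_pos l _).ne' (hPml_pos _).ne', hcl t]
  have hSj : S j x = deriv L u * (0 - Dval) + deriv (fun t => Real.log (Pml (c t))) (x j) := by
    rw [hS]
    have : (fun t => Real.log (P (Function.update x j t))) = fun t => Real.log (P (c t)) := rfl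
    rw [this, hsplit, deriv_fun_add hA.differentiableAt hBdiff, hA.deriv]
  have hSlx : S l x = deriv L u := by rw [hSl]
  have hLHS : deriv (fun t => Real.log (Pml (Function.update x j t))) (x j)
      = S j x - deriv L u * (0 - Dval) := by
    rw [hSj]; ring
  rw [hLHS, hdenom, hSlx]
  have : deriv (fun t => S l (Function.update x j t)) (x j) = K * (0 - Dval) := hnum.deriv
  rw [this]
  field_simp
end

section
/- Under the ANM setup, let L ⊆ V be a sink set and define P_{-L}(x) = ∏_{i ∈ V \ L} p_i(x_i − f_i(x)). Then for every j ∈ V \ L and every x ∈ ℝ^D, the deciduous (marginalized) score equals the full score plus the sum of residue terms over the removed nodes: ∂_{x_j} log P_{-L}(x) = S_j(x) + ∑_{l ∈ L} (∂_{x_j} f_l(x)) · (log p_l)'(x_l − f_l(x)). -/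
open MeasureTheory Real

/-- ANM deciduous score over a sink set: for `j ∉ L`,
    `∂_{x_j} log P_{-L}(x) = S_j(x) + ∑_{l ∈ L} ∂_{x_j} f_l(x) · (log p_l)'(x_l − f_l(x))`. -/
theorem anm_sink_deciduous_score
    (D : ℕ) (Pa : Fin D → Set (Fin D))
    (hPa : ∀ i, i ∉ Pa i)
    (p : Fin D → ℝ → ℝ)
    (hp_pos : ∀ i ε, 0 < p i ε)
    (hp_smooth : ∀ i, ContDiff ℝ 2 (p i))
    (f : Fin D → (Fin D → ℝ) → ℝ)
    (hf_smooth : ∀ i, ContDiff ℝ 2 (f i))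
    (hf_dep : ∀ i j, j ∉ Pa i → ∀ (x : Fin D → ℝ) (t : ℝ),
      f i (Function.update x j t) = f i x)
    (P : (Fin D → ℝ) → ℝ)
    (hP : ∀ x, P x = ∏ i, p i (x i - f i x))
    (S : Fin D → (Fin D → ℝ) → ℝ)
    (hS : ∀ j x, S j x = deriv (fun t => Real.log (P (Function.update x j t))) (x j))
    (L : Finset (Fin D))
    (hSink : ∀ j ∈ L, ∀ i, i ∉ L → j ∉ Pa i)
    (PmL : (Fin D → ℝ) → ℝ)
    (hPmL : ∀ x, PmL x = ∏ i ∈ Lᶜ, p i (x i - f i x))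
    (j : Fin D) (hjL : j ∉ L)
    (x : Fin D → ℝ) :
    deriv (fun t => Real.log (PmL (Function.update x j t))) (x j)
      = S j x + ∑ l ∈ L, deriv (fun t => f l (Function.update x j t)) (x j)
          * deriv (fun e => Real.log (p l e)) (x l - f l x) := by
  classical
  have hx'j : Function.update x j (x j) = x := Function.update_eq_self j x
  have hupd : HasDerivAt (fun t => Function.update x j t) (Pi.single j (1:ℝ)) (x j) :=
    hasDerivAt_update x j (x j)
  set df : Fin D → ℝ := fun i => deriv (fun t => f i (Function.update x j t)) (x j) with hdfdef
  have hdf : ∀ i, HasDerivAt (fun t => f i (Function.update x j t)) (df i) (x j) := by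
    intro i
    have : DifferentiableAt ℝ (fun t => f i (Function.update x j t)) (x j) :=
      (((hf_smooth i).differentiable two_ne_zero) _).comp _ hupd.differentiableAt
    exact this.hasDerivAt
  set d : Fin D → ℝ := fun i => (if i = j then (1:ℝ) else 0) - df i with hddef
  have hG : ∀ i, HasDerivAt (fun t => Function.update x j t i - f i (Function.update x j t))
      (d i) (x j) := by
    intro i
    have hcoord : HasDerivAt (fun t => Function.update x j t i)
        (if i = j then (1:ℝ) else 0) (x j) := by
      by_cases h : i = j
      · subst h
        simp only [Function.update_self, if_pos rfl]
        exact hasDerivAt_id _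
      · simp only [Function.update_of_ne h, if_neg h]
        exact hasDerivAt_const _ _
    exact hcoord.sub (hdf i)
  set e : Fin D → ℝ := fun i =>
    (p i (x i - f i x))⁻¹ * (deriv (p i) (x i - f i x) * d i) with hedef
  have hpd : ∀ i (y : ℝ), HasDerivAt (p i) (deriv (p i) y) y := fun i y =>
    (((hp_smooth i).differentiable two_ne_zero) y).hasDerivAt
  have hGval : ∀ i, Function.update x j (x j) i - f i (Function.update x j (x j)) = x i - f i x := by
    intro i; rw [hx'j]
  have he : ∀ i, HasDerivAt
      (fun t => Real.log (p i (Function.update x j t i - f i (Function.update x j t))))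
      (e i) (x j) := by
    intro i
    have hp' : HasDerivAt (p i) (deriv (p i) (x i - f i x))
        (Function.update x j (x j) i - f i (Function.update x j (x j))) := by
      rw [hGval i]; exact hpd i _
    have h1 := hp'.comp (x j) (hG i)
    have h2 := (Real.hasDerivAt_log (ne_of_gt (hp_pos i
        (Function.update x j (x j) i - f i (Function.update x j (x j)))))).comp (x j) h1
    rw [hGval i] at h2
    simpa [hedef, Function.comp_def, mul_assoc] using h2
  have hLHS : deriv (fun t => Real.log (PmL (Function.update x j t))) (x j) = ∑ i ∈ Lᶜ, e i := by
    have hfun : (fun t => Real.log (PmL (Function.update x j t)))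
        = fun t => ∑ i ∈ Lᶜ, Real.log (p i (Function.update x j t i - f i (Function.update x j t))) := by
      funext t
      rw [hPmL]
      exact Real.log_prod (fun i _ => ne_of_gt (hp_pos i _))
    rw [hfun]
    exact (HasDerivAt.fun_sum (fun i _ => he i)).deriv
  have hSval : S j x = ∑ i : Fin D, e i := by
    rw [hS]
    have hfun : (fun t => Real.log (P (Function.update x j t)))
        = fun t => ∑ i : Fin D, Real.log (p i (Function.update x j t i - f i (Function.update x j t))) := by
      funext t
      rw [hP]
      exact Real.log_prod (fun i _ => ne_of_gt (hp_pos i _))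
    rw [hfun]
    exact (HasDerivAt.fun_sum (fun i _ => he i)).deriv
  have hlogp : ∀ l, deriv (fun y => Real.log (p l y)) (x l - f l x)
      = (p l (x l - f l x))⁻¹ * deriv (p l) (x l - f l x) := by
    intro l
    have h := (Real.hasDerivAt_log (ne_of_gt (hp_pos l (x l - f l x)))).comp
      (x l - f l x) (hpd l (x l - f l x))
    have := h.deriv
    simpa [Function.comp_def] using this
  rw [hLHS, hSval]
  have hsplit : ∑ i ∈ L, e i + ∑ i ∈ Lᶜ, e i = ∑ i : Fin D, e i :=
    Finset.sum_add_sum_compl L e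
  have hsum2 : ∑ l ∈ L, df l * deriv (fun y => Real.log (p l y)) (x l - f l x)
      = ∑ l ∈ L, -(e l) := by
    refine Finset.sum_congr rfl (fun l hl => ?_)
    have hlj : l ≠ j := fun h => hjL (h ▸ hl)
    rw [hlogp l]
    simp only [hedef, hddef, if_neg hlj]
    ring
  rw [hsum2, Finset.sum_neg_distrib]
  linarith
end

section
/- Under the ANM setup, let L ⊆ V be a sink set and define P_{-L}(x) = ∏_{i ∈ V \ L} p_i(x_i − f_i(x)). Then for every j ∈ V \ L and every x ∈ ℝ^D, the Hessian diagonal of the marginalized log-density satisfies ∂²_{x_j x_j} log P_{-L}(x) = 𝒟_j(x) + ∑_{l ∈ L} [ (∂²_{x_j x_j} f_l(x)) · (log p_l)'(x_l − f_l(x)) − (∂_{x_j} f_l(x))² · (log p_l)''(x_l − f_l(x)) ]. -/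
open MeasureTheory Real

private lemma ANM_derivC1_of_C2 {f : ℝ → ℝ} (hf : ContDiff ℝ 2 f) :
    ContDiff ℝ 1 (deriv f) := by
  have h2 : (2 : WithTop ℕ∞) = 1 + 1 := by norm_num
  rw [h2] at hf
  exact (contDiff_succ_iff_deriv.1 hf).2.2

private lemma ANM_deriv2_comp_const_sub {q h : ℝ → ℝ} (hq : ContDiff ℝ 2 q)
    (hh : ContDiff ℝ 2 h) (c s : ℝ) :
    deriv (deriv (fun t => q (c - h t))) s
      = deriv h s ^ 2 * deriv (deriv q) (c - h s)
        - deriv (deriv h) s * deriv q (c - h s) := by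
  have hqd : Differentiable ℝ q := hq.differentiable (by norm_num)
  have hhd : Differentiable ℝ h := hh.differentiable (by norm_num)
  have hq' : Differentiable ℝ (deriv q) := (ANM_derivC1_of_C2 hq).differentiable one_ne_zero
  have hh' : Differentiable ℝ (deriv h) := (ANM_derivC1_of_C2 hh).differentiable one_ne_zero
  have step1 : deriv (fun t => q (c - h t)) = fun y => deriv q (c - h y) * (-deriv h y) := by
    funext y
    rw [show (fun t => q (c - h t)) = q ∘ (fun t => c - h t) from rfl,
      deriv_comp y (hqd _) ((hhd y).const_sub c), deriv_const_sub]
  rw [step1]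
  have d1 : DifferentiableAt ℝ (fun y => deriv q (c - h y)) s :=
    (hq' _).comp s ((hhd s).const_sub c)
  have d2 : DifferentiableAt ℝ (fun y => -deriv h y) s := (hh' s).neg
  rw [deriv_fun_mul d1 d2]
  have e1 : deriv (fun y => deriv q (c - h y)) s = deriv (deriv q) (c - h s) * (-deriv h s) := by
    rw [show (fun y => deriv q (c - h y)) = (deriv q) ∘ (fun t => c - h t) from rfl,
      deriv_comp s (hq' _) ((hhd s).const_sub c), deriv_const_sub]
  have e2 : deriv (fun y => -deriv h y) s = -deriv (deriv h) s := deriv.fun_neg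
  rw [e1, e2]; ring

private lemma ANM_deriv2_sum {ι : Type*} (s : Finset ι) (g : ι → ℝ → ℝ)
    (hg : ∀ i ∈ s, ContDiff ℝ 2 (g i)) (t : ℝ) :
    deriv (deriv (fun y => ∑ i ∈ s, g i y)) t = ∑ i ∈ s, deriv (deriv (g i)) t := by
  have step1 : deriv (fun y => ∑ i ∈ s, g i y) = fun y => ∑ i ∈ s, deriv (g i) y := by
    funext y
    exact deriv_fun_sum (fun i hi => ((hg i hi).differentiable (by norm_num)) y)
  rw [step1]
  exact deriv_fun_sum (fun i hi => ((ANM_derivC1_of_C2 (hg i hi)).differentiable one_ne_zero) t)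

/-- ANM Hessian diagonal of the marginalized log-density over a sink set `L`:
    for `j ∉ L`, `∂²_{x_j x_j} log P_{-L}(x) = 𝒟_j(x) + ∑_{l ∈ L}
    [∂²_{x_j x_j} f_l(x) · (log p_l)'(x_l − f_l(x))
      − (∂_{x_j} f_l(x))² · (log p_l)''(x_l − f_l(x))]`. -/
theorem anm_sink_hessian_diagonal
    (D : ℕ) (Pa : Fin D → Set (Fin D))
    (hPa : ∀ i, i ∉ Pa i)
    (p : Fin D → ℝ → ℝ)
    (hp_pos : ∀ i ε, 0 < p i ε)
    (hp_smooth : ∀ i, ContDiff ℝ 2 (p i))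
    (f : Fin D → (Fin D → ℝ) → ℝ)
    (hf_smooth : ∀ i, ContDiff ℝ 2 (f i))
    (hf_dep : ∀ i j, j ∉ Pa i → ∀ (x : Fin D → ℝ) (t : ℝ),
      f i (Function.update x j t) = f i x)
    (P : (Fin D → ℝ) → ℝ)
    (hP : ∀ x, P x = ∏ i, p i (x i - f i x))
    (S : Fin D → (Fin D → ℝ) → ℝ)
    (hS : ∀ j x, S j x = deriv (fun t => Real.log (P (Function.update x j t))) (x j))
    (Dg : Fin D → (Fin D → ℝ) → ℝ)
    (hD : ∀ j x, Dg j x = deriv (fun t => S j (Function.update x j t)) (x j))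
    (L : Finset (Fin D))
    (hSink : ∀ j ∈ L, ∀ i, i ∉ L → j ∉ Pa i)
    (PmL : (Fin D → ℝ) → ℝ)
    (hPmL : ∀ x, PmL x = ∏ i ∈ Lᶜ, p i (x i - f i x))
    (j : Fin D) (hjL : j ∉ L)
    (x : Fin D → ℝ) :
    deriv (deriv (fun t => Real.log (PmL (Function.update x j t)))) (x j)
      = Dg j x + ∑ l ∈ L,
          (deriv (deriv (fun t => f l (Function.update x j t))) (x j)
              * deriv (fun e => Real.log (p l e)) (x l - f l x)
            - (deriv (fun t => f l (Function.update x j t)) (x j)) ^ 2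
              * deriv (deriv (fun e => Real.log (p l e))) (x l - f l x)) := by
  classical
  -- the line through `x` in direction `j`
  have hu : ContDiff ℝ 2 (fun t : ℝ => Function.update x j t) := by
    apply contDiff_pi.2
    intro i
    by_cases hij : i = j
    · subst hij
      simpa [Function.update_self] using contDiff_fun_id (𝕜 := ℝ) (E := ℝ)
    · simpa [Function.update_of_ne hij] using contDiff_const (𝕜 := ℝ) (E := ℝ) (c := x i)
  -- the per-coordinate log densities along the line
  set g : Fin D → ℝ → ℝ :=
    fun i t => Real.log (p i (Function.update x j t i - f i (Function.update x j t))) with hg_def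
  have hq : ∀ i, ContDiff ℝ 2 (fun e => Real.log (p i e)) :=
    fun i => (hp_smooth i).log (fun e => (hp_pos i e).ne')
  have hg : ∀ i, ContDiff ℝ 2 (g i) := by
    intro i
    exact (hq i).comp (((contDiff_pi.1 hu i)).sub ((hf_smooth i).comp hu))
  -- log of products
  have hlogPmL : (fun t => Real.log (PmL (Function.update x j t)))
      = fun t => ∑ i ∈ Lᶜ, g i t := by
    funext t
    rw [hPmL]
    exact Real.log_prod (fun i _ => (hp_pos i _).ne')
  have hlogP : (fun t => Real.log (P (Function.update x j t)))
      = fun t => ∑ i, g i t := by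
    funext t
    rw [hP]
    exact Real.log_prod (fun i _ => (hp_pos i _).ne')
  -- Dg is the second derivative of log P along the line
  have hDg : Dg j x = deriv (deriv (fun t => Real.log (P (Function.update x j t)))) (x j) := by
    rw [hD]
    congr 1
    funext t
    rw [hS]
    congr 1
    · funext s
      rw [Function.update_idem]
    · exact Function.update_self j t x
  -- second derivatives of the sums
  have hLHS : deriv (deriv (fun t => Real.log (PmL (Function.update x j t)))) (x j)
      = ∑ i ∈ Lᶜ, deriv (deriv (g i)) (x j) := by
    rw [hlogPmL]
    exact ANM_deriv2_sum _ _ (fun i _ => hg i) _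
  have hDgsum : Dg j x = ∑ i, deriv (deriv (g i)) (x j) := by
    rw [hDg, hlogP]
    exact ANM_deriv2_sum _ _ (fun i _ => hg i) _
  -- per-element computation for l ∈ L
  have hterm : ∀ l ∈ L,
      (deriv (deriv (fun t => f l (Function.update x j t))) (x j)
          * deriv (fun e => Real.log (p l e)) (x l - f l x)
        - (deriv (fun t => f l (Function.update x j t)) (x j)) ^ 2
          * deriv (deriv (fun e => Real.log (p l e))) (x l - f l x))
      = -(deriv (deriv (g l)) (x j)) := by
    intro l hl
    have hlj : l ≠ j := fun h => hjL (h ▸ hl)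
    have hgl : g l = fun t => (fun e => Real.log (p l e)) (x l - f l (Function.update x j t)) := by
      funext t
      simp only [hg_def, Function.update_of_ne hlj]
    have hchain := ANM_deriv2_comp_const_sub (q := fun e => Real.log (p l e))
      (h := fun t => f l (Function.update x j t)) (hq l) ((hf_smooth l).comp hu) (x l) (x j)
    have hux : Function.update x j (x j) = x := Function.update_eq_self j x
    rw [hgl, hchain, hux]
    ring
  rw [hLHS, hDgsum, Finset.sum_congr rfl hterm, ← Finset.sum_compl_add_sum L
    (fun i => deriv (deriv (g i)) (x j)), Finset.sum_neg_distrib]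
  ring
end

section
/- Under the ANM setup, for every j ∈ V and every x ∈ ℝ^D, the Hessian diagonal of the full log-density admits the explicit decomposition 𝒟_j(x) = (log p_j)''(x_j − f_j(x)) − ∑_{i ∈ V : j ∈ Pa(i)} [ (∂²_{x_j x_j} f_i(x)) · (log p_i)'(x_i − f_i(x)) − (∂_{x_j} f_i(x))² · (log p_i)''(x_i − f_i(x)) ]. -/
open MeasureTheory Real

/-- ANM Hessian diagonal decomposition:
    `𝒟_j(x) = (log p_j)''(x_j − f_j(x)) − ∑_{i : j ∈ Pa(i)}
    [∂²_{x_j x_j} f_i(x) · (log p_i)'(x_i − f_i(x))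
      − (∂_{x_j} f_i(x))² · (log p_i)''(x_i − f_i(x))]`. -/
theorem anm_hessian_diagonal_decomposition
    (D : ℕ) (Pa : Fin D → Set (Fin D)) [∀ j i, Decidable (j ∈ Pa i)]
    (hPa : ∀ i, i ∉ Pa i)
    (p : Fin D → ℝ → ℝ)
    (hp_pos : ∀ i ε, 0 < p i ε)
    (hp_smooth : ∀ i, ContDiff ℝ 2 (p i))
    (f : Fin D → (Fin D → ℝ) → ℝ)
    (hf_smooth : ∀ i, ContDiff ℝ 2 (f i))
    (hf_dep : ∀ i j, j ∉ Pa i → ∀ (x : Fin D → ℝ) (t : ℝ),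
      f i (Function.update x j t) = f i x)
    (P : (Fin D → ℝ) → ℝ)
    (hP : ∀ x, P x = ∏ i, p i (x i - f i x))
    (S : Fin D → (Fin D → ℝ) → ℝ)
    (hS : ∀ j x, S j x = deriv (fun t => Real.log (P (Function.update x j t))) (x j))
    (Dg : Fin D → (Fin D → ℝ) → ℝ)
    (hD : ∀ j x, Dg j x = deriv (fun t => S j (Function.update x j t)) (x j))
    (j : Fin D) (x : Fin D → ℝ) :
    Dg j x
      = deriv (deriv (fun e => Real.log (p j e))) (x j - f j x)
        - ∑ i ∈ Finset.univ.filter (fun i => j ∈ Pa i),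
            (deriv (deriv (fun t => f i (Function.update x j t))) (x j)
                * deriv (fun e => Real.log (p i e)) (x i - f i x)
              - (deriv (fun t => f i (Function.update x j t)) (x j)) ^ 2
                * deriv (deriv (fun e => Real.log (p i e))) (x i - f i x)) := by
  classical
  -- smoothness of the curve s ↦ update x j s
  have hLsm : ContDiff ℝ 2 (fun s : ℝ => Function.update x j s) := by
    apply contDiff_pi.2
    intro k
    by_cases hk : k = j
    · subst hk; simp only [Function.update_self]; exact contDiff_id
    · simpa [Function.update_of_ne hk] using contDiff_const
  have hφsm : ∀ i, ContDiff ℝ 2 (fun s => f i (Function.update x j s)) :=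
    fun i => (hf_smooth i).comp hLsm
  have hφdiff : ∀ i, Differentiable ℝ (fun s => f i (Function.update x j s)) :=
    fun i => (hφsm i).differentiable two_ne_zero
  have two_eq : (2 : WithTop ℕ∞) = 1 + 1 := by norm_num
  have hφ'diff : ∀ i, Differentiable ℝ (deriv (fun s => f i (Function.update x j s))) := by
    intro i
    have h := (contDiff_succ_iff_deriv.mp (two_eq ▸ hφsm i)).2.2
    exact h.differentiable one_ne_zero
  have hLpsm : ∀ i, ContDiff ℝ 2 (fun e => Real.log (p i e)) :=
    fun i => (hp_smooth i).log (fun e => (hp_pos i e).ne')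
  have hLpdiff : ∀ i, Differentiable ℝ (fun e => Real.log (p i e)) :=
    fun i => (hLpsm i).differentiable two_ne_zero
  have hLp'diff : ∀ i, Differentiable ℝ (deriv (fun e => Real.log (p i e))) := by
    intro i
    have h := (contDiff_succ_iff_deriv.mp (two_eq ▸ hLpsm i)).2.2
    exact h.differentiable one_ne_zero
  have hlogP : ∀ s : ℝ, Real.log (P (Function.update x j s))
      = ∑ i, Real.log (p i (Function.update x j s i - f i (Function.update x j s))) := by
    intro s
    rw [hP]
    exact Real.log_prod (fun i _ => (hp_pos _ _).ne')
  -- the first derivative of s ↦ log P (update x j s)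
  have key1 : ∀ t : ℝ, HasDerivAt (fun s => Real.log (P (Function.update x j s)))
      (deriv (fun e => Real.log (p j e)) (t - f j x)
        - ∑ i ∈ Finset.univ.filter (fun i => j ∈ Pa i),
            deriv (fun s => f i (Function.update x j s)) t
              * deriv (fun e => Real.log (p i e)) (x i - f i (Function.update x j t))) t := by
    intro t
    have hfun : (fun s => Real.log (P (Function.update x j s)))
        = fun s => ∑ i, Real.log (p i (Function.update x j s i - f i (Function.update x j s))) :=
      funext hlogP
    rw [hfun]
    have hterm : ∀ i : Fin D,
        HasDerivAt (fun s => Real.log (p i (Function.update x j s i - f i (Function.update x j s))))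
          (if i = j then deriv (fun e => Real.log (p j e)) (t - f j x)
           else if j ∈ Pa i then
             -(deriv (fun s => f i (Function.update x j s)) t
                 * deriv (fun e => Real.log (p i e)) (x i - f i (Function.update x j t)))
           else 0) t := by
      intro i
      by_cases hij : i = j
      · subst hij
        rw [if_pos rfl]
        have h1 : (fun s => Real.log (p i (Function.update x i s i - f i (Function.update x i s))))
            = fun s => Real.log (p i (s - f i x)) := by
          funext s
          rw [Function.update_self, hf_dep i i (hPa i) x s]
        rw [h1]
        have hinner : HasDerivAt (fun s : ℝ => s - f i x) 1 t := by
          simpa using (hasDerivAt_id t).sub_const (f i x)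
        have houter : HasDerivAt (fun e => Real.log (p i e))
            (deriv (fun e => Real.log (p i e)) (t - f i x)) (t - f i x) :=
          ((hLpdiff i) _).hasDerivAt
        simpa [Function.comp_def] using houter.comp t hinner
      · rw [if_neg hij]
        by_cases hmem : j ∈ Pa i
        · rw [if_pos hmem]
          have h1 : (fun s => Real.log (p i (Function.update x j s i - f i (Function.update x j s))))
              = fun s => Real.log (p i (x i - f i (Function.update x j s))) := by
            funext s; rw [Function.update_of_ne hij]
          rw [h1]
          have hφt : HasDerivAt (fun s => f i (Function.update x j s))
              (deriv (fun s => f i (Function.update x j s)) t) t := ((hφdiff i) t).hasDerivAt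
          have hinner : HasDerivAt (fun s => x i - f i (Function.update x j s))
              (0 - deriv (fun s => f i (Function.update x j s)) t) t :=
            (hasDerivAt_const t (x i)).sub hφt
          have houter : HasDerivAt (fun e => Real.log (p i e))
              (deriv (fun e => Real.log (p i e)) (x i - f i (Function.update x j t)))
              (x i - f i (Function.update x j t)) := ((hLpdiff i) _).hasDerivAt
          have hc := houter.comp t hinner
          exact hc.congr_deriv (by ring)
        · rw [if_neg hmem]
          have h1 : (fun s => Real.log (p i (Function.update x j s i - f i (Function.update x j s))))
              = fun _ => Real.log (p i (x i - f i x)) := by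
            funext s; rw [Function.update_of_ne hij, hf_dep i j hmem x s]
          rw [h1]
          exact hasDerivAt_const t _
    have hsum := HasDerivAt.fun_sum (u := Finset.univ) (fun i _ => hterm i)
    refine hsum.congr_deriv ?_
    symm
    -- identify the sum of the piecewise derivatives
    rw [← Finset.add_sum_erase _ _ (Finset.mem_univ j), if_pos rfl]
    have hsub : Finset.univ.filter (fun i => j ∈ Pa i) ⊆ Finset.univ.erase j := by
      intro i hi
      rw [Finset.mem_filter] at hi
      refine Finset.mem_erase.2 ⟨?_, Finset.mem_univ i⟩
      rintro rfl
      exact hPa i hi.2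
    have hzero : ∀ i ∈ Finset.univ.erase j, i ∉ Finset.univ.filter (fun i => j ∈ Pa i) →
        (if i = j then deriv (fun e => Real.log (p j e)) (t - f j x)
         else if j ∈ Pa i then
           -(deriv (fun s => f i (Function.update x j s)) t
               * deriv (fun e => Real.log (p i e)) (x i - f i (Function.update x j t)))
         else 0) = 0 := by
      intro i hi hni
      rw [if_neg (Finset.mem_erase.1 hi).1, if_neg]
      intro hmem
      exact hni (Finset.mem_filter.2 ⟨Finset.mem_univ i, hmem⟩)
    rw [← Finset.sum_subset hsub hzero]
    rw [sub_eq_add_neg, ← Finset.sum_neg_distrib]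
    congr 1
    apply Finset.sum_congr rfl
    intro i hi
    rw [Finset.mem_filter] at hi
    have hij : i ≠ j := by rintro rfl; exact hPa i hi.2
    rw [if_neg hij, if_pos hi.2]
  -- formula for S j along the line
  have hSformula : ∀ t : ℝ, S j (Function.update x j t)
      = deriv (fun e => Real.log (p j e)) (t - f j x)
        - ∑ i ∈ Finset.univ.filter (fun i => j ∈ Pa i),
            deriv (fun s => f i (Function.update x j s)) t
              * deriv (fun e => Real.log (p i e)) (x i - f i (Function.update x j t)) := by
    intro t
    rw [hS j (Function.update x j t)]
    have hupd : (fun s => Real.log (P (Function.update (Function.update x j t) j s)))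
        = fun s => Real.log (P (Function.update x j s)) := by
      funext s; rw [Function.update_idem]
    rw [hupd, Function.update_self]
    exact (key1 t).deriv
  rw [hD j x]
  have hfun2 : (fun t => S j (Function.update x j t))
      = fun t => deriv (fun e => Real.log (p j e)) (t - f j x)
        - ∑ i ∈ Finset.univ.filter (fun i => j ∈ Pa i),
            deriv (fun s => f i (Function.update x j s)) t
              * deriv (fun e => Real.log (p i e)) (x i - f i (Function.update x j t)) :=
    funext hSformula
  rw [hfun2]
  -- now differentiate once more at x j
  have hA : HasDerivAt (fun t => deriv (fun e => Real.log (p j e)) (t - f j x))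
      (deriv (deriv (fun e => Real.log (p j e))) (x j - f j x)) (x j) := by
    have hinner : HasDerivAt (fun t : ℝ => t - f j x) 1 (x j) := by
      simpa using (hasDerivAt_id (x j)).sub_const (f j x)
    simpa [Function.comp_def] using (((hLp'diff j) _).hasDerivAt).comp (x j) hinner
  have hB : ∀ i ∈ Finset.univ.filter (fun i => j ∈ Pa i),
      HasDerivAt (fun t => deriv (fun s => f i (Function.update x j s)) t
            * deriv (fun e => Real.log (p i e)) (x i - f i (Function.update x j t)))
        (deriv (deriv (fun t => f i (Function.update x j t))) (x j)
            * deriv (fun e => Real.log (p i e)) (x i - f i x)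
          - (deriv (fun t => f i (Function.update x j t)) (x j)) ^ 2
            * deriv (deriv (fun e => Real.log (p i e))) (x i - f i x)) (x j) := by
    intro i _
    have h1 : HasDerivAt (deriv (fun s => f i (Function.update x j s)))
        (deriv (deriv (fun s => f i (Function.update x j s))) (x j)) (x j) :=
      ((hφ'diff i) _).hasDerivAt
    have hφt : HasDerivAt (fun s => f i (Function.update x j s))
        (deriv (fun s => f i (Function.update x j s)) (x j)) (x j) := ((hφdiff i) _).hasDerivAt
    have hinner : HasDerivAt (fun t => x i - f i (Function.update x j t))
        (0 - deriv (fun s => f i (Function.update x j s)) (x j)) (x j) :=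
      (hasDerivAt_const _ (x i)).sub hφt
    have h2 : HasDerivAt (fun t => deriv (fun e => Real.log (p i e)) (x i - f i (Function.update x j t)))
        (deriv (deriv (fun e => Real.log (p i e))) (x i - f i (Function.update x j (x j)))
          * (0 - deriv (fun s => f i (Function.update x j s)) (x j))) (x j) :=
      (((hLp'diff i) _).hasDerivAt).comp (x j) hinner
    have hmul := h1.mul h2
    rw [Function.update_eq_self] at hmul
    exact hmul.congr_deriv (by ring)
  have hsum := HasDerivAt.fun_sum hB
  have htot := hA.sub hsum
  exact htot.deriv
end

section
/- Under the ANM setup, suppose l ∈ V is a leaf and the noise density of node l is Gaussian: p_l(ε) = (2πσ²)^{−1/2} exp(−ε²/(2σ²)) for some σ > 0. Then the Hessian diagonal at node l is constant: 𝒟_l(x) = ∂²_{x_l x_l} log P(x) = −1/σ² for every x ∈ ℝ^D. Consequently, for every probability measure μ on ℝ^D, the variance Var_{x ∼ μ}[𝒟_l(x)] = 0. -/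
open MeasureTheory ProbabilityTheory Real

/-- ANM with Gaussian leaf noise: if `l` is a leaf and `p_l` is the
    `N(0, σ²)` density, then `𝒟_l(x) = ∂²_{x_l x_l} log P(x) = −1/σ²` for all `x`;
    consequently `Var_{x∼μ}[𝒟_l(x)] = 0` for every probability measure `μ`. -/
theorem anm_gaussian_leaf_constant_hessian
    (D : ℕ) (Pa : Fin D → Set (Fin D))
    (hPa : ∀ i, i ∉ Pa i)
    (p : Fin D → ℝ → ℝ)
    (hp_pos : ∀ i ε, 0 < p i ε)
    (hp_smooth : ∀ i, ContDiff ℝ 2 (p i))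
    (f : Fin D → (Fin D → ℝ) → ℝ)
    (hf_smooth : ∀ i, ContDiff ℝ 2 (f i))
    (hf_dep : ∀ i j, j ∉ Pa i → ∀ (x : Fin D → ℝ) (t : ℝ),
      f i (Function.update x j t) = f i x)
    (P : (Fin D → ℝ) → ℝ)
    (hP : ∀ x, P x = ∏ i, p i (x i - f i x))
    (S : Fin D → (Fin D → ℝ) → ℝ)
    (hS : ∀ j x, S j x = deriv (fun t => Real.log (P (Function.update x j t))) (x j))
    (Dg : Fin D → (Fin D → ℝ) → ℝ)
    (hD : ∀ j x, Dg j x = deriv (fun t => S j (Function.update x j t)) (x j))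
    (l : Fin D) (hleaf : ∀ i, l ∉ Pa i)
    (σ : ℝ) (hσ : 0 < σ)
    (hgauss : ∀ ε : ℝ, p l ε
      = (2 * Real.pi * σ ^ 2) ^ (-(1 / 2) : ℝ) * Real.exp (-ε ^ 2 / (2 * σ ^ 2))) :
    (∀ x : Fin D → ℝ, Dg l x = -1 / σ ^ 2)
    ∧ (∀ x : Fin D → ℝ,
        deriv (deriv (fun t => Real.log (P (Function.update x l t)))) (x l) = -1 / σ ^ 2)
    ∧ ∀ μ : Measure (Fin D → ℝ), IsProbabilityMeasure μ →
        variance (Dg l) μ = 0 := by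
  have hσ2 : (σ : ℝ) ^ 2 ≠ 0 := by positivity
  have hApos : (0 : ℝ) < (2 * Real.pi * σ ^ 2) ^ (-(1 / 2) : ℝ) :=
    Real.rpow_pos_of_pos (by positivity) _
  -- the product over the non-leaf coordinates
  set K : (Fin D → ℝ) → ℝ :=
    fun x => ∏ i ∈ Finset.univ.erase l, p i (x i - f i x) with hK
  have hKpos : ∀ x, 0 < K x := fun x =>
    Finset.prod_pos fun i _ => hp_pos i _
  -- key formula for the log-density along the leaf coordinate
  have hkey : ∀ (x : Fin D → ℝ) (t : ℝ),
      Real.log (P (Function.update x l t))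
        = -(t - f l x) ^ 2 / (2 * σ ^ 2)
          + (Real.log ((2 * Real.pi * σ ^ 2) ^ (-(1 / 2) : ℝ)) + Real.log (K x)) := by
    intro x t
    have hPt : P (Function.update x l t) = p l (t - f l x) * K x := by
      rw [hP, ← Finset.mul_prod_erase Finset.univ _ (Finset.mem_univ l)]
      congr 1
      · rw [Function.update_self, hf_dep l l (hPa l)]
      · apply Finset.prod_congr rfl
        intro i hi
        rw [Function.update_of_ne (Finset.mem_erase.mp hi).1,
          hf_dep i l (hleaf i)]
    rw [hPt, Real.log_mul (hp_pos l _).ne' (hKpos x).ne', hgauss,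
      Real.log_mul hApos.ne' (Real.exp_pos _).ne', Real.log_exp]
    ring
  -- derivative of the log-density in the leaf coordinate
  have hderiv : ∀ (x : Fin D → ℝ) (t : ℝ),
      HasDerivAt (fun t => Real.log (P (Function.update x l t)))
        (-(t - f l x) / σ ^ 2) t := by
    intro x t
    have h1 : HasDerivAt
        (fun s : ℝ => -(s - f l x) ^ 2 / (2 * σ ^ 2)
          + (Real.log ((2 * Real.pi * σ ^ 2) ^ (-(1 / 2) : ℝ)) + Real.log (K x)))
        (-(↑2 * (t - f l x) ^ (2 - 1) * 1) / (2 * σ ^ 2)) t := by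
      exact ((((hasDerivAt_id t).sub_const (f l x)).pow 2).neg.div_const (2 * σ ^ 2)).add_const _
    have h2 : (-(↑2 * (t - f l x) ^ (2 - 1) * 1) / (2 * σ ^ 2))
        = -(t - f l x) / σ ^ 2 := by
      field_simp
      ring
    rw [h2] at h1
    exact h1.congr_of_eventuallyEq (Filter.Eventually.of_forall fun s => hkey x s)
  -- explicit formula for the score
  have hSf : ∀ x : Fin D → ℝ, S l x = -(x l - f l x) / σ ^ 2 := by
    intro x
    rw [hS]
    exact (hderiv x (x l)).deriv
  -- part 1
  have h1 : ∀ x : Fin D → ℝ, Dg l x = -1 / σ ^ 2 := by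
    intro x
    rw [hD]
    have heq : (fun t => S l (Function.update x l t))
        = fun t => -(t - f l x) / σ ^ 2 := by
      funext t
      rw [hSf, Function.update_self, hf_dep l l (hPa l)]
    rw [heq]
    have : HasDerivAt (fun t : ℝ => -(t - f l x) / σ ^ 2) (-(1 : ℝ) / σ ^ 2) (x l) :=
      ((hasDerivAt_id (x l)).sub_const (f l x)).neg.div_const _
    exact this.deriv
  refine ⟨h1, ?_, ?_⟩
  · intro x
    have heq : deriv (fun t => Real.log (P (Function.update x l t)))
        = fun t => -(t - f l x) / σ ^ 2 :=
      funext fun t => (hderiv x t).deriv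
    rw [heq]
    have : HasDerivAt (fun t : ℝ => -(t - f l x) / σ ^ 2) (-(1 : ℝ) / σ ^ 2) (x l) :=
      ((hasDerivAt_id (x l)).sub_const (f l x)).neg.div_const _
    exact this.deriv
  · intro μ hμ
    have hconst : Dg l = fun _ => -1 / σ ^ 2 := funext h1
    rw [hconst, variance]
    have : evariance (fun _ : Fin D → ℝ => -1 / σ ^ 2) μ = 0 := by
      rw [evariance]
      simp [integral_const, measure_univ]
    simp [this]
end

section
/- Under the ANM setup, assume ∫_ℝ p_i(ε) dε = 1 for every i ∈ V and that the graph admits a topological order. If l ∈ V is a leaf, then the noise at node l has distribution p_l under the joint density: for every bounded continuous function g : ℝ → ℝ, ∫_{ℝ^D} g(x_l − f_l(x)) P(x) dx = ∫_ℝ g(ε) p_l(ε) dε; i.e., the pushforward of the probability measure with density P under the map x ↦ x_l − f_l(x) has density p_l. -/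
open MeasureTheory Real

private lemma insertNth_last_castSucc {n : ℕ} (t : ℝ) (z : Fin n → ℝ) (i : Fin n) :
    Fin.insertNth (α := fun _ => ℝ) (Fin.last n) t z (Fin.castSucc i) = z i := by
  rw [← Fin.succAbove_last, Fin.insertNth_apply_succAbove]

private lemma insertNth_last_eq_update {n : ℕ} (t : ℝ) (z : Fin n → ℝ) :
    Fin.insertNth (α := fun _ => ℝ) (Fin.last n) t z
      = Function.update (Fin.insertNth (α := fun _ => ℝ) (Fin.last n) 0 z) (Fin.last n) t := by
  funext j
  induction j using Fin.lastCases with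
  | last => simp
  | cast i =>
      rw [insertNth_last_castSucc, Function.update_of_ne (Fin.castSucc_lt_last i).ne,
        insertNth_last_castSucc]

private lemma insertNth_last_update {n : ℕ} (z : Fin n → ℝ) (j : Fin n) (t : ℝ) :
    Fin.insertNth (α := fun _ => ℝ) (Fin.last n) 0 (Function.update z j t)
      = Function.update (Fin.insertNth (α := fun _ => ℝ) (Fin.last n) 0 z) (Fin.castSucc j) t := by
  funext k
  induction k using Fin.lastCases with
  | last =>
      rw [Function.update_of_ne (Fin.castSucc_lt_last j).ne', Fin.insertNth_apply_same,
        Fin.insertNth_apply_same]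
  | cast i =>
      rw [insertNth_last_castSucc]
      by_cases h : i = j
      · subst h
        rw [Function.update_self, Function.update_self]
      · rw [Function.update_of_ne h, Function.update_of_ne (by simpa using h),
          insertNth_last_castSucc]

private lemma key_lintegral : ∀ (n : ℕ) (q : Fin n → ℝ → ENNReal), (∀ i, Measurable (q i)) →
    ∀ (f : Fin n → (Fin n → ℝ) → ℝ), (∀ i, Measurable (f i)) →
    (∀ i j : Fin n, ¬ j < i → ∀ x t, f i (Function.update x j t) = f i x) →
    ∫⁻ x : Fin n → ℝ, ∏ i, q i (x i - f i x) = ∏ i, ∫⁻ t : ℝ, q i t := by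
  intro n
  induction n with
  | zero =>
      intro q hq f hf hdep
      rw [Finset.univ_eq_empty, Finset.prod_empty]
      simp only [Finset.univ_eq_empty, Finset.prod_empty]
      rw [lintegral_one, Measure.volume_pi_eq_dirac isEmptyElim, measure_univ]
  | succ n IH =>
      intro q hq f hf hdep
      have hfx : Measurable fun x : Fin (n+1) → ℝ => ∏ i, q i (x i - f i x) :=
        Finset.measurable_prod _ fun i _ => (hq i).comp ((measurable_pi_apply i).sub (hf i))
      set e := MeasurableEquiv.piFinSuccAbove (fun _ : Fin (n+1) => ℝ) (Fin.last n) with he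
      have hmp : MeasurePreserving (⇑e.symm) :=
        (volume_preserving_piFinSuccAbove (fun _ : Fin (n+1) => ℝ) (Fin.last n)).symm
      have hes : ∀ (t : ℝ) (z : Fin n → ℝ),
          e.symm (t, z) = Fin.insertNth (α := fun _ => ℝ) (Fin.last n) t z := fun t z => rfl
      have hins0 : Measurable fun z : Fin n → ℝ => Fin.insertNth (α := fun _ => ℝ) (Fin.last n) (0:ℝ) z := by
        refine measurable_pi_lambda _ fun j => ?_
        induction j using Fin.lastCases with
        | last => simp only [Fin.insertNth_apply_same]; exact measurable_const
        | cast i => simp only [insertNth_last_castSucc]; exact measurable_pi_apply i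
      have step : ∀ z : Fin n → ℝ,
          (∫⁻ t : ℝ, ∏ i, q i (e.symm (t, z) i - f i (e.symm (t, z))))
            = (∏ i : Fin n, q (Fin.castSucc i)
                (z i - f (Fin.castSucc i) (Fin.insertNth (α := fun _ => ℝ) (Fin.last n) 0 z)))
              * ∫⁻ s : ℝ, q (Fin.last n) s := by
        intro z
        have h2 : ∀ (i : Fin (n+1)) (t : ℝ),
            f i (Fin.insertNth (α := fun _ => ℝ) (Fin.last n) t z) = f i (Fin.insertNth (α := fun _ => ℝ) (Fin.last n) 0 z) := by
          intro i t
          rw [insertNth_last_eq_update t z]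
          exact hdep i (Fin.last n) (not_lt.2 (Fin.le_last i)) _ t
        have h3 : ∀ t : ℝ, (∏ i, q i (e.symm (t, z) i - f i (e.symm (t, z))))
            = (∏ i : Fin n, q (Fin.castSucc i)
                (z i - f (Fin.castSucc i) (Fin.insertNth (α := fun _ => ℝ) (Fin.last n) 0 z)))
              * q (Fin.last n) (t - f (Fin.last n) (Fin.insertNth (α := fun _ => ℝ) (Fin.last n) 0 z)) := by
          intro t
          rw [hes, Fin.prod_univ_castSucc]
          congr 1
          · refine Finset.prod_congr rfl fun i _ => ?_
            rw [h2, insertNth_last_castSucc]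
          · rw [h2, Fin.insertNth_apply_same]
        simp_rw [h3]
        have hqm : Measurable fun t : ℝ => q (Fin.last n)
            (t - f (Fin.last n) (Fin.insertNth (α := fun _ => ℝ) (Fin.last n) 0 z)) :=
          (hq _).comp (measurable_id.sub measurable_const)
        rw [lintegral_const_mul _ hqm]
        congr 1
        exact (measurePreserving_sub_right volume
          (f (Fin.last n) (Fin.insertNth (α := fun _ => ℝ) (Fin.last n) 0 z))).lintegral_comp (hq _)
      calc ∫⁻ x : Fin (n+1) → ℝ, ∏ i, q i (x i - f i x)
          = ∫⁻ y : ℝ × (Fin n → ℝ), ∏ i, q i (e.symm y i - f i (e.symm y)) :=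
            (hmp.lintegral_comp hfx).symm
        _ = ∫⁻ z : Fin n → ℝ, ∫⁻ t : ℝ, ∏ i, q i (e.symm (t, z) i - f i (e.symm (t, z))) := by
            rw [Measure.volume_eq_prod]
            exact lintegral_prod_symm _ (hfx.comp e.symm.measurable).aemeasurable
        _ = ∫⁻ z : Fin n → ℝ, (∏ i : Fin n, q (Fin.castSucc i)
              (z i - f (Fin.castSucc i) (Fin.insertNth (α := fun _ => ℝ) (Fin.last n) 0 z)))
              * ∫⁻ s : ℝ, q (Fin.last n) s := lintegral_congr step
        _ = (∫⁻ z : Fin n → ℝ, ∏ i : Fin n, q (Fin.castSucc i)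
              (z i - f (Fin.castSucc i) (Fin.insertNth (α := fun _ => ℝ) (Fin.last n) 0 z)))
              * ∫⁻ s : ℝ, q (Fin.last n) s :=
            lintegral_mul_const _ (Finset.measurable_prod _ fun i _ =>
              (hq _).comp ((measurable_pi_apply i).sub ((hf _).comp hins0)))
        _ = (∏ i : Fin n, ∫⁻ t : ℝ, q (Fin.castSucc i) t) * ∫⁻ s : ℝ, q (Fin.last n) s := by
            rw [IH (fun i => q (Fin.castSucc i)) (fun i => hq _)
              (fun i z => f (Fin.castSucc i) (Fin.insertNth (α := fun _ => ℝ) (Fin.last n) 0 z))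
              (fun i => (hf _).comp hins0)
              (fun i j hij x t => by
                show f (Fin.castSucc i)
                    (Fin.insertNth (α := fun _ => ℝ) (Fin.last n) 0 (Function.update x j t))
                  = f (Fin.castSucc i) (Fin.insertNth (α := fun _ => ℝ) (Fin.last n) 0 x)
                rw [insertNth_last_update]
                exact hdep _ _ (by simpa using hij) _ t)]
        _ = ∏ i : Fin (n+1), ∫⁻ t : ℝ, q i t := by
            rw [Fin.prod_univ_castSucc fun i : Fin (n+1) => ∫⁻ t : ℝ, q i t]

private lemma key_lintegral_perm (D : ℕ) (Pa : Fin D → Set (Fin D))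
    (ord : Equiv.Perm (Fin D)) (hord : ∀ i j, j ∈ Pa i → ord j < ord i)
    (q : Fin D → ℝ → ENNReal) (hq : ∀ i, Measurable (q i))
    (f : Fin D → (Fin D → ℝ) → ℝ) (hf : ∀ i, Measurable (f i))
    (hdep : ∀ i j, j ∉ Pa i → ∀ x t, f i (Function.update x j t) = f i x) :
    ∫⁻ x : Fin D → ℝ, ∏ i, q i (x i - f i x) = ∏ i, ∫⁻ t : ℝ, q i t := by
  classical
  set Φ := MeasurableEquiv.piCongrLeft (fun _ : Fin D => ℝ) (ord.symm : Fin D ≃ Fin D) with hΦdef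
  have hΦ : ∀ (y : Fin D → ℝ) (b : Fin D), Φ y b = y (ord b) := by
    intro y b
    have h := MeasurableEquiv.piCongrLeft_apply_apply (ord.symm : Fin D ≃ Fin D)
      (β := fun _ : Fin D => ℝ) y (ord b)
    simpa [hΦdef] using h
  have hupd : ∀ (y : Fin D → ℝ) (j : Fin D) (t : ℝ),
      Φ (Function.update y j t) = Function.update (Φ y) (ord.symm j) t := by
    intro y j t
    funext b
    rw [hΦ]
    by_cases hb : b = ord.symm j
    · subst hb
      rw [Equiv.apply_symm_apply, Function.update_self, Function.update_self]
    · rw [Function.update_of_ne (fun h => hb (by rw [← h, Equiv.symm_apply_apply])),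
        Function.update_of_ne hb, hΦ]
  have hmp := volume_measurePreserving_piCongrLeft (fun _ : Fin D => ℝ)
    (ord.symm : Fin D ≃ Fin D)
  have hfx : Measurable fun x : Fin D → ℝ => ∏ i, q i (x i - f i x) :=
    Finset.measurable_prod _ fun i _ => (hq i).comp ((measurable_pi_apply i).sub (hf i))
  calc ∫⁻ x : Fin D → ℝ, ∏ i, q i (x i - f i x)
      = ∫⁻ y : Fin D → ℝ, ∏ i, q i (Φ y i - f i (Φ y)) := (hmp.lintegral_comp hfx).symm
    _ = ∫⁻ y : Fin D → ℝ, ∏ a, q (ord.symm a) (y a - f (ord.symm a) (Φ y)) := by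
        refine lintegral_congr fun y => ?_
        rw [← Equiv.prod_comp (ord.symm : Fin D ≃ Fin D)
          (fun i => q i (Φ y i - f i (Φ y)))]
        refine Finset.prod_congr rfl fun a _ => ?_
        rw [hΦ, Equiv.apply_symm_apply]
    _ = ∏ a, ∫⁻ t : ℝ, q (ord.symm a) t := by
        refine key_lintegral D (fun a => q (ord.symm a)) (fun a => hq _)
          (fun a y => f (ord.symm a) (Φ y)) (fun a => (hf _).comp Φ.measurable) ?_
        intro a j hja y t
        show f (ord.symm a) (Φ (Function.update y j t)) = f (ord.symm a) (Φ y)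
        rw [hupd]
        refine hdep _ _ (fun hmem => hja ?_) _ t
        have := hord _ _ hmem
        simpa using this
    _ = ∏ i, ∫⁻ t : ℝ, q i t := Equiv.prod_comp (ord.symm : Fin D ≃ Fin D) (fun i => ∫⁻ t : ℝ, q i t)

/-- ANM leaf-noise distribution: if `l` is a leaf (with normalized noise
    densities and a topological order), then for every bounded continuous
    `g : ℝ → ℝ`, `∫ g(x_l − f_l(x)) P(x) dx = ∫ g(ε) p_l(ε) dε`. -/
theorem anm_leaf_noise_distribution
    (D : ℕ) (Pa : Fin D → Set (Fin D))
    (hPa : ∀ i, i ∉ Pa i)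
    (p : Fin D → ℝ → ℝ)
    (hp_pos : ∀ i ε, 0 < p i ε)
    (hp_smooth : ∀ i, ContDiff ℝ 2 (p i))
    (f : Fin D → (Fin D → ℝ) → ℝ)
    (hf_smooth : ∀ i, ContDiff ℝ 2 (f i))
    (hf_dep : ∀ i j, j ∉ Pa i → ∀ (x : Fin D → ℝ) (t : ℝ),
      f i (Function.update x j t) = f i x)
    (P : (Fin D → ℝ) → ℝ)
    (hP : ∀ x, P x = ∏ i, p i (x i - f i x))
    (hp_int : ∀ i, ∫ ε : ℝ, p i ε = 1)
    (htopo : ∃ ord : Equiv.Perm (Fin D), ∀ i j, j ∈ Pa i → ord j < ord i)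
    (l : Fin D) (hleaf : ∀ i, l ∉ Pa i)
    (g : ℝ → ℝ) (hg_cont : Continuous g) (hg_bdd : ∃ C, ∀ y : ℝ, |g y| ≤ C) :
    ∫ x : Fin D → ℝ, g (x l - f l x) * P x = ∫ ε : ℝ, g ε * p l ε := by
  classical
  obtain ⟨ord, hord⟩ := htopo
  have hp_cont : ∀ i, Continuous (p i) := fun i => (hp_smooth i).continuous
  have hf_cont : ∀ i, Continuous (f i) := fun i => (hf_smooth i).continuous
  have hp_integrable : ∀ i, Integrable (p i) := by
    intro i
    by_contra h
    have := hp_int i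
    rw [integral_undef h] at this
    exact zero_ne_one this
  have hP_cont : Continuous P := by
    have hPe : P = fun x => ∏ i, p i (x i - f i x) := funext hP
    rw [hPe]
    exact continuous_finset_prod _ fun i _ =>
      (hp_cont i).comp ((continuous_apply i).sub (hf_cont i))
  have hP_nonneg : ∀ x, 0 ≤ P x := fun x => by
    rw [hP]; exact Finset.prod_nonneg fun i _ => (hp_pos i _).le
  -- main claim for nonnegative bounded continuous G
  have main : ∀ G : ℝ → ℝ, Continuous G → (∀ y, 0 ≤ G y) → (∃ C, ∀ y, G y ≤ C) →
      Integrable (fun x : Fin D → ℝ => G (x l - f l x) * P x) ∧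
        (∫ x : Fin D → ℝ, G (x l - f l x) * P x) = ∫ ε : ℝ, G ε * p l ε := by
    intro G hGc hG0 hGb
    set w : Fin D → ℝ → ℝ := fun i => if i = l then (fun ε => G ε * p l ε) else p i with hw
    have hw_cont : ∀ i, Continuous (w i) := fun i => by
      by_cases h : i = l
      · simp only [hw, if_pos h]; exact hGc.mul (hp_cont l)
      · simp only [hw, if_neg h]; exact hp_cont i
    have hw_nonneg : ∀ i ε, 0 ≤ w i ε := fun i ε => by
      by_cases h : i = l
      · simp only [hw, if_pos h]; exact mul_nonneg (hG0 ε) (hp_pos l ε).le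
      · simp only [hw, if_neg h]; exact (hp_pos i ε).le
    have hw_int : ∀ i, Integrable (w i) := fun i => by
      by_cases h : i = l
      · simp only [hw, if_pos h]
        obtain ⟨C, hC⟩ := hGb
        exact (hp_integrable l).bdd_mul hGc.aestronglyMeasurable
          (ae_of_all _ fun x => by rw [Real.norm_eq_abs, abs_of_nonneg (hG0 x)]; exact hC x)
      · simp only [hw, if_neg h]; exact hp_integrable i
    have hq : ∀ i, Measurable fun ε => ENNReal.ofReal (w i ε) := fun i =>
      ENNReal.measurable_ofReal.comp (hw_cont i).measurable
    have hkey := key_lintegral_perm D Pa ord hord (fun i ε => ENNReal.ofReal (w i ε)) hq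
      f (fun i => (hf_cont i).measurable) hf_dep
    have hprod : ∀ x : Fin D → ℝ,
        (∏ i, ENNReal.ofReal (w i (x i - f i x)))
          = ENNReal.ofReal (G (x l - f l x) * P x) := by
      intro x
      rw [← ENNReal.ofReal_prod_of_nonneg (fun i _ => hw_nonneg i _)]
      congr 1
      calc ∏ i, w i (x i - f i x)
          = (∏ i, if i = l then G (x i - f i x) else 1) * ∏ i, p i (x i - f i x) := by
            rw [← Finset.prod_mul_distrib]
            refine Finset.prod_congr rfl fun i _ => ?_
            by_cases h : i = l
            · subst h; simp [hw]
            · simp [hw, h]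
        _ = G (x l - f l x) * P x := by
            rw [Finset.prod_ite_eq' Finset.univ l (fun i => G (x i - f i x)), hP]
            simp
    have hwint_val : ∀ i, (∫⁻ t : ℝ, ENNReal.ofReal (w i t)) = ENNReal.ofReal (∫ t : ℝ, w i t) :=
      fun i => (ofReal_integral_eq_lintegral_ofReal (hw_int i) (ae_of_all _ (hw_nonneg i))).symm
    have hprod_val : (∏ i, ∫⁻ t : ℝ, ENNReal.ofReal (w i t))
        = ENNReal.ofReal (∫ ε : ℝ, G ε * p l ε) := by
      calc ∏ i, ∫⁻ t : ℝ, ENNReal.ofReal (w i t)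
          = ∏ i, ENNReal.ofReal (∫ t : ℝ, w i t) :=
            Finset.prod_congr rfl fun i _ => hwint_val i
        _ = ENNReal.ofReal (∫ ε : ℝ, G ε * p l ε) := by
            rw [Finset.prod_eq_single l]
            · simp [hw]
            · intro i _ h; simp [hw, if_neg h, hp_int i]
            · intro h; exact absurd (Finset.mem_univ l) h
    have hH_cont : Continuous fun x : Fin D → ℝ => G (x l - f l x) * P x :=
      (hGc.comp ((continuous_apply l).sub (hf_cont l))).mul hP_cont
    have hH_nonneg : ∀ x : Fin D → ℝ, 0 ≤ G (x l - f l x) * P x := fun x =>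
      mul_nonneg (hG0 _) (hP_nonneg x)
    have hlint : ∫⁻ x : Fin D → ℝ, ENNReal.ofReal (G (x l - f l x) * P x)
        = ENNReal.ofReal (∫ ε : ℝ, G ε * p l ε) := by
      rw [← hprod_val, ← hkey]
      exact lintegral_congr fun x => (hprod x).symm
    constructor
    · refine ⟨hH_cont.aestronglyMeasurable, ?_⟩
      rw [HasFiniteIntegral]
      have hnn : ∀ x : Fin D → ℝ, ((‖G (x l - f l x) * P x‖₊ : ENNReal))
          = ENNReal.ofReal (G (x l - f l x) * P x) := fun x =>
        Real.enorm_eq_ofReal (hH_nonneg x)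
      calc ∫⁻ x : Fin D → ℝ, (‖G (x l - f l x) * P x‖₊ : ENNReal)
          = ∫⁻ x : Fin D → ℝ, ENNReal.ofReal (G (x l - f l x) * P x) := lintegral_congr hnn
        _ = ENNReal.ofReal (∫ ε : ℝ, G ε * p l ε) := hlint
        _ < ⊤ := ENNReal.ofReal_lt_top
    · rw [integral_eq_lintegral_of_nonneg_ae (ae_of_all _ hH_nonneg)
        hH_cont.aestronglyMeasurable, hlint,
        ENNReal.toReal_ofReal (integral_nonneg fun ε => mul_nonneg (hG0 ε) (hp_pos l ε).le)]
  -- split `g` into positive and negative parts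
  obtain ⟨C, hC⟩ := hg_bdd
  set G₁ : ℝ → ℝ := fun y => max (g y) 0 with hG1
  set G₂ : ℝ → ℝ := fun y => max (-g y) 0 with hG2
  have h1 := main G₁ (hg_cont.max continuous_const) (fun y => le_max_right _ _)
    ⟨C, fun y => max_le ((le_abs_self _).trans (hC y)) ((abs_nonneg _).trans (hC y))⟩
  have h2 := main G₂ (hg_cont.neg.max continuous_const) (fun y => le_max_right _ _)
    ⟨C, fun y => max_le ((neg_le_abs _).trans (hC y)) ((abs_nonneg _).trans (hC y))⟩
  have hsplit : ∀ y, G₁ y - G₂ y = g y := fun y =>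
    max_zero_sub_max_neg_zero_eq_self (g y)
  have hbd1 : ∃ C', ∀ y : ℝ, ‖G₁ y‖ ≤ C' :=
    ⟨C, fun y => by
      rw [Real.norm_eq_abs, abs_of_nonneg (le_max_right _ _)]
      exact max_le ((le_abs_self _).trans (hC y)) ((abs_nonneg _).trans (hC y))⟩
  have hbd2 : ∃ C', ∀ y : ℝ, ‖G₂ y‖ ≤ C' :=
    ⟨C, fun y => by
      rw [Real.norm_eq_abs, abs_of_nonneg (le_max_right _ _)]
      exact max_le ((neg_le_abs _).trans (hC y)) ((abs_nonneg _).trans (hC y))⟩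
  have hint1 : Integrable (fun ε : ℝ => G₁ ε * p l ε) :=
    (hp_integrable l).bdd_mul (hg_cont.max continuous_const).aestronglyMeasurable (ae_of_all _ hbd1.choose_spec)
  have hint2 : Integrable (fun ε : ℝ => G₂ ε * p l ε) :=
    (hp_integrable l).bdd_mul (hg_cont.neg.max continuous_const).aestronglyMeasurable (ae_of_all _ hbd2.choose_spec)
  calc ∫ x : Fin D → ℝ, g (x l - f l x) * P x
      = ∫ x : Fin D → ℝ, (G₁ (x l - f l x) * P x - G₂ (x l - f l x) * P x) := by
        refine integral_congr_ae (ae_of_all _ fun x => ?_)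
        show g (x l - f l x) * P x = G₁ (x l - f l x) * P x - G₂ (x l - f l x) * P x
        rw [← sub_mul, hsplit]
    _ = (∫ x : Fin D → ℝ, G₁ (x l - f l x) * P x)
        - ∫ x : Fin D → ℝ, G₂ (x l - f l x) * P x := integral_sub h1.1 h2.1
    _ = (∫ ε : ℝ, G₁ ε * p l ε) - ∫ ε : ℝ, G₂ ε * p l ε := by rw [h1.2, h2.2]
    _ = ∫ ε : ℝ, (G₁ ε * p l ε - G₂ ε * p l ε) := (integral_sub hint1 hint2).symm
    _ = ∫ ε : ℝ, g ε * p l ε := by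
        refine integral_congr_ae (ae_of_all _ fun ε => ?_)
        show G₁ ε * p l ε - G₂ ε * p l ε = g ε * p l ε
        rw [← sub_mul, hsplit]
end

section
/- Under the ANM setup, if l ∈ V is a leaf, then the Hessian diagonal at node l equals the curvature of the noise log-density evaluated at the residual: 𝒟_l(x) = (log p_l)''(x_l − f_l(x)) for every x ∈ ℝ^D. Moreover, if additionally ∫_ℝ p_i(ε) dε = 1 for every i ∈ V, the graph admits a topological order, and ε ↦ (log p_l)''(ε) · p_l(ε) is integrable on ℝ, then the expectation of the Hessian diagonal under the model satisfies ∫_{ℝ^D} 𝒟_l(x) P(x) dx = ∫_ℝ (log p_l)''(ε) p_l(ε) dε. -/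
open MeasureTheory Real Finset
open scoped ENNReal

/-- Key factorization lemma: integrating a product of functions of the residuals
over the product space factors into one-dimensional integrals, by a Fubini-type
argument peeling variables in topological order. -/
lemma anm_step {D : ℕ} (Pa : Fin D → Set (Fin D)) (hPa : ∀ i, i ∉ Pa i)
    (f : Fin D → (Fin D → ℝ) → ℝ) (hf_cont : ∀ i, Continuous (f i))
    (hf_dep : ∀ i j, j ∉ Pa i → ∀ (x : Fin D → ℝ) (t : ℝ),
      f i (Function.update x j t) = f i x)
    (ord : Equiv.Perm (Fin D)) (hord : ∀ i j, j ∈ Pa i → ord j < ord i)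
    (h : Fin D → ℝ → ℝ≥0∞) (hh : ∀ i, Measurable (h i)) :
    ∀ s : Finset (Fin D),
      (∀ j ∈ s, ∀ k, j ∈ Pa k → k ∉ s → ∀ ε, h k ε = 1) →
      ∀ x : Fin D → ℝ,
        (∫⋯∫⁻_s, (fun y => ∏ i, h i (y i - f i y))) x
          = (∏ i ∈ s, ∫⁻ ε, h i ε) * ∏ i ∈ sᶜ, h i (x i - f i x) := by
  have hF : Measurable (fun y : Fin D → ℝ => ∏ i, h i (y i - f i y)) :=
    Finset.measurable_prod _ fun i _ =>
      (hh i).comp ((measurable_pi_apply i).sub (hf_cont i).measurable)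
  intro s
  induction s using Finset.strongInduction with
  | _ s ih =>
    intro hcond x
    rcases s.eq_empty_or_nonempty with rfl | hne
    · simp
    · obtain ⟨i, hi, hmin⟩ := s.exists_min_image (fun j => ord j) hne
      have hsub : s.erase i ⊂ s := Finset.erase_ssubset hi
      have hcond' : ∀ j ∈ s.erase i, ∀ k, j ∈ Pa k → k ∉ s.erase i → ∀ ε, h k ε = 1 := by
        intro j hj k hjk hk ε
        rcases Finset.mem_erase.mp hj with ⟨hji, hjs⟩
        by_cases hki : k = i
        · subst hki
          exact absurd (hord k j hjk) (not_lt.mpr (hmin j hjs))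
        · exact hcond j hjs k hjk (fun hks => hk (Finset.mem_erase.mpr ⟨hki, hks⟩)) ε
      have hinner : ∀ t : ℝ,
          (∫⋯∫⁻_(s.erase i), (fun y => ∏ i, h i (y i - f i y))) (Function.update x i t)
            = (∏ j ∈ s.erase i, ∫⁻ ε, h j ε) *
              (h i (t - f i x) * ∏ k ∈ sᶜ, h k (x k - f k x)) := by
        intro t
        rw [ih _ hsub hcond' (Function.update x i t)]
        congr 1
        rw [Finset.compl_erase,
          Finset.prod_insert (fun hmem => (Finset.mem_compl.mp hmem) hi)]
        congr 1
        · rw [Function.update_self, hf_dep i i (hPa i)]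
        · refine Finset.prod_congr rfl fun k hk => ?_
          have hks : k ∉ s := Finset.mem_compl.mp hk
          have hki : k ≠ i := fun e => hks (e ▸ hi)
          by_cases hik : i ∈ Pa k
          · rw [hcond i hi k hik hks, hcond i hi k hik hks]
          · rw [Function.update_of_ne hki, hf_dep k i hik]
      rw [lmarginal_erase _ hF hi x]
      simp_rw [hinner]
      have hm : Measurable fun t : ℝ => h i (t - f i x) := by fun_prop
      rw [lintegral_const_mul _ (hm.mul_const _),
        lintegral_mul_const _ hm,
        lintegral_sub_right_eq_self (h i) (f i x),
        ← Finset.mul_prod_erase s (fun j => ∫⁻ ε, h j ε) hi]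
      ring

/-- Product-factorization over the whole space. -/
lemma anm_key {D : ℕ} (Pa : Fin D → Set (Fin D)) (hPa : ∀ i, i ∉ Pa i)
    (f : Fin D → (Fin D → ℝ) → ℝ) (hf_cont : ∀ i, Continuous (f i))
    (hf_dep : ∀ i j, j ∉ Pa i → ∀ (x : Fin D → ℝ) (t : ℝ),
      f i (Function.update x j t) = f i x)
    (ord : Equiv.Perm (Fin D)) (hord : ∀ i j, j ∈ Pa i → ord j < ord i)
    (h : Fin D → ℝ → ℝ≥0∞) (hh : ∀ i, Measurable (h i)) :
    ∫⁻ x : Fin D → ℝ, ∏ i, h i (x i - f i x) = ∏ i, ∫⁻ ε, h i ε := by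
  rw [volume_pi, lintegral_eq_lmarginal_univ (0 : Fin D → ℝ),
    anm_step Pa hPa f hf_cont hf_dep ord hord h hh Finset.univ
      (fun j _ k _ hk => absurd (Finset.mem_univ k) hk) 0]
  simp

/-- ANM leaf Hessian diagonal: if `l` is a leaf then
    `𝒟_l(x) = (log p_l)''(x_l − f_l(x))` for all `x`; moreover, if additionally
    the noise densities are normalized, the graph admits a topological order,
    and `ε ↦ (log p_l)''(ε) p_l(ε)` is integrable, then
    `∫ 𝒟_l(x) P(x) dx = ∫ (log p_l)''(ε) p_l(ε) dε`. -/
theorem anm_leaf_hessian_expectation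
    (D : ℕ) (Pa : Fin D → Set (Fin D))
    (hPa : ∀ i, i ∉ Pa i)
    (p : Fin D → ℝ → ℝ)
    (hp_pos : ∀ i ε, 0 < p i ε)
    (hp_smooth : ∀ i, ContDiff ℝ 2 (p i))
    (f : Fin D → (Fin D → ℝ) → ℝ)
    (hf_smooth : ∀ i, ContDiff ℝ 2 (f i))
    (hf_dep : ∀ i j, j ∉ Pa i → ∀ (x : Fin D → ℝ) (t : ℝ),
      f i (Function.update x j t) = f i x)
    (P : (Fin D → ℝ) → ℝ)
    (hP : ∀ x, P x = ∏ i, p i (x i - f i x))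
    (S : Fin D → (Fin D → ℝ) → ℝ)
    (hS : ∀ j x, S j x = deriv (fun t => Real.log (P (Function.update x j t))) (x j))
    (Dg : Fin D → (Fin D → ℝ) → ℝ)
    (hD : ∀ j x, Dg j x = deriv (fun t => S j (Function.update x j t)) (x j))
    (l : Fin D) (hleaf : ∀ i, l ∉ Pa i) :
    (∀ x : Fin D → ℝ,
        Dg l x = deriv (deriv (fun e => Real.log (p l e))) (x l - f l x))
    ∧ ((∀ i, ∫ ε : ℝ, p i ε = 1) →
        (∃ ord : Equiv.Perm (Fin D), ∀ i j, j ∈ Pa i → ord j < ord i) →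
        Integrable (fun ε : ℝ => deriv (deriv (fun e => Real.log (p l e))) ε * p l ε) →
        ∫ x : Fin D → ℝ, Dg l x * P x
          = ∫ ε : ℝ, deriv (deriv (fun e => Real.log (p l e))) ε * p l ε) := by
  classical
  set L : ℝ → ℝ := fun e => Real.log (p l e) with hL
  have hC2L : ContDiff ℝ 2 L := (hp_smooth l).log (fun e => (hp_pos l e).ne')
  -- Part 1
  have part1 : ∀ x : Fin D → ℝ, Dg l x = deriv (deriv L) (x l - f l x) := by
    intro x
    have hQpos : 0 < ∏ i ∈ Finset.univ.erase l, p i (x i - f i x) :=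
      Finset.prod_pos fun i _ => hp_pos i _
    have hPupd : ∀ t, P (Function.update x l t)
        = p l (t - f l x) * ∏ i ∈ Finset.univ.erase l, p i (x i - f i x) := by
      intro t
      rw [hP, ← Finset.mul_prod_erase Finset.univ _ (Finset.mem_univ l)]
      congr 1
      · rw [Function.update_self, hf_dep l l (hleaf l) x t]
      · refine Finset.prod_congr rfl fun k hk => ?_
        rw [Function.update_of_ne (Finset.ne_of_mem_erase hk),
          hf_dep k l (hleaf k) x t]
    have hlogP : ∀ t, Real.log (P (Function.update x l t))
        = L (t - f l x) + Real.log (∏ i ∈ Finset.univ.erase l, p i (x i - f i x)) := by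
      intro t
      rw [hPupd t, Real.log_mul (hp_pos l _).ne' hQpos.ne']
    have hSupd : ∀ t, S l (Function.update x l t) = deriv L (t - f l x) := by
      intro t
      rw [hS]
      have h1 : (fun s : ℝ => Real.log (P (Function.update (Function.update x l t) l s)))
          = fun s : ℝ => L (s - f l x)
              + Real.log (∏ i ∈ Finset.univ.erase l, p i (x i - f i x)) := by
        funext s
        rw [Function.update_idem, hlogP s]
      rw [h1, Function.update_self, deriv_add_const, deriv_comp_sub_const]
    rw [hD]
    have h2 : (fun t => S l (Function.update x l t)) = fun t => deriv L (t - f l x) :=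
      funext hSupd
    rw [h2, deriv_comp_sub_const]
  refine ⟨part1, fun hnorm hordex hint => ?_⟩
  obtain ⟨ord, hord⟩ := hordex
  set G : ℝ → ℝ := deriv (deriv L) with hGdef
  have hGcont : Continuous G := by
    have h2 : ContDiff ℝ ((1 : ℕ) + 1) L := by
      have : ((1 : ℕ) + 1 : WithTop ℕ∞) = 2 := by norm_num
      rw [this]; exact hC2L
    rw [contDiff_succ_iff_deriv] at h2
    exact h2.2.2.continuous_deriv le_rfl
  set g : ℝ → ℝ := fun ε => G ε * p l ε with hgdef
  have hgcont : Continuous g := hGcont.mul (hp_smooth l).continuous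
  have hpi_int : ∀ i, Integrable (p i) := by
    intro i
    by_contra hni
    have h1 := hnorm i
    rw [integral_undef hni] at h1
    exact zero_ne_one h1
  have hlint_p : ∀ i, ∫⁻ ε, ENNReal.ofReal (p i ε) = 1 := by
    intro i
    rw [← ofReal_integral_eq_lintegral_ofReal (hpi_int i)
      (Filter.Eventually.of_forall fun ε => (hp_pos i ε).le), hnorm i, ENNReal.ofReal_one]
  -- the key integral identity for an arbitrary measurable weight at the leaf
  have key' : ∀ q : ℝ → ℝ, Measurable q →
      (∫⁻ x : Fin D → ℝ, ENNReal.ofReal (q (x l - f l x)) *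
        ∏ i ∈ Finset.univ.erase l, ENNReal.ofReal (p i (x i - f i x)))
        = ∫⁻ ε, ENNReal.ofReal (q ε) := by
    intro q hq
    set H : Fin D → ℝ → ℝ≥0∞ := fun i ε =>
      if i = l then ENNReal.ofReal (q ε) else ENNReal.ofReal (p i ε) with hHdef
    have hh : ∀ i, Measurable (H i) := by
      intro i
      by_cases hi : i = l
      · subst hi; simp only [hHdef, if_pos rfl]
        exact ENNReal.measurable_ofReal.comp hq
      · simp only [hHdef, if_neg hi]
        exact ENNReal.measurable_ofReal.comp (hp_smooth i).continuous.measurable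
    have hkey := anm_key Pa hPa f (fun i => (hf_smooth i).continuous) hf_dep ord hord H hh
    have hl1 : (∫⁻ x : Fin D → ℝ, ∏ i, H i (x i - f i x))
        = ∫⁻ x : Fin D → ℝ, ENNReal.ofReal (q (x l - f l x)) *
            ∏ i ∈ Finset.univ.erase l, ENNReal.ofReal (p i (x i - f i x)) := by
      refine lintegral_congr fun x => ?_
      rw [← Finset.mul_prod_erase Finset.univ (fun i => H i (x i - f i x))
        (Finset.mem_univ l)]
      congr 1
      · simp only [hHdef, if_pos rfl]
      · refine Finset.prod_congr rfl fun k hk => ?_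
        simp only [hHdef, if_neg (Finset.ne_of_mem_erase hk)]
    have hl2 : (∏ i, ∫⁻ ε, H i ε) = ∫⁻ ε, ENNReal.ofReal (q ε) := by
      rw [← Finset.mul_prod_erase Finset.univ (fun i => ∫⁻ ε, H i ε) (Finset.mem_univ l)]
      have h1 : (∫⁻ ε, H l ε) = ∫⁻ ε, ENNReal.ofReal (q ε) := by
        simp only [hHdef, if_pos rfl]
      have h2 : (∏ i ∈ Finset.univ.erase l, ∫⁻ ε, H i ε) = 1 := by
        refine Finset.prod_eq_one fun k hk => ?_
        simp only [hHdef, if_neg (Finset.ne_of_mem_erase hk)]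
        exact hlint_p k
      rw [h1, h2, mul_one]
    rw [← hl1, hkey, hl2]
  -- pointwise factorization of `ofReal` over the product
  have hptwise : ∀ (q : ℝ → ℝ) (x : Fin D → ℝ),
      ENNReal.ofReal (q (x l - f l x) * ∏ i ∈ Finset.univ.erase l, p i (x i - f i x))
        = ENNReal.ofReal (q (x l - f l x)) *
          ∏ i ∈ Finset.univ.erase l, ENNReal.ofReal (p i (x i - f i x)) := by
    intro q x
    rw [ENNReal.ofReal_mul' (Finset.prod_nonneg fun i _ => (hp_pos i _).le),
      ENNReal.ofReal_prod_of_nonneg (fun i _ => (hp_pos i _).le)]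
  have hPhi : ∀ x : Fin D → ℝ, G (x l - f l x) * P x
      = g (x l - f l x) * ∏ i ∈ Finset.univ.erase l, p i (x i - f i x) := by
    intro x
    rw [hP, ← Finset.mul_prod_erase Finset.univ _ (Finset.mem_univ l)]
    simp only [hgdef]
    ring
  have hPcont : Continuous P := by
    have hPf : P = fun x => ∏ i, p i (x i - f i x) := funext hP
    rw [hPf]
    exact continuous_finset_prod _ fun i _ =>
      (hp_smooth i).continuous.comp ((continuous_apply i).sub (hf_smooth i).continuous)
  have hΦcont : Continuous (fun x : Fin D → ℝ => G (x l - f l x) * P x) :=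
    (hGcont.comp ((continuous_apply l).sub (hf_smooth l).continuous)).mul hPcont
  have habs : (∫⁻ x : Fin D → ℝ, ENNReal.ofReal ‖G (x l - f l x) * P x‖)
      = ENNReal.ofReal (∫ ε, |g ε|) := by
    have hpt : ∀ x : Fin D → ℝ, ENNReal.ofReal ‖G (x l - f l x) * P x‖
        = ENNReal.ofReal (|g (x l - f l x)|) *
          ∏ i ∈ Finset.univ.erase l, ENNReal.ofReal (p i (x i - f i x)) := by
      intro x
      rw [Real.norm_eq_abs, hPhi x, abs_mul,
        abs_of_nonneg (Finset.prod_nonneg fun i _ => (hp_pos i _).le)]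
      exact hptwise (fun ε => |g ε|) x
    simp only [hpt]
    rw [key' (fun ε => |g ε|) hgcont.abs.measurable,
      ← ofReal_integral_eq_lintegral_ofReal hint.abs
        (Filter.Eventually.of_forall fun ε => abs_nonneg _)]
  have hΦint : Integrable (fun x : Fin D → ℝ => G (x l - f l x) * P x) := by
    refine ⟨hΦcont.aestronglyMeasurable, ?_⟩
    rw [hasFiniteIntegral_iff_norm, habs]
    exact ENNReal.ofReal_lt_top
  have hpos : (∫⁻ x : Fin D → ℝ, ENNReal.ofReal (G (x l - f l x) * P x))
      = ∫⁻ ε, ENNReal.ofReal (g ε) := by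
    have hpt : ∀ x : Fin D → ℝ, ENNReal.ofReal (G (x l - f l x) * P x)
        = ENNReal.ofReal (g (x l - f l x)) *
          ∏ i ∈ Finset.univ.erase l, ENNReal.ofReal (p i (x i - f i x)) := by
      intro x
      rw [hPhi x]
      exact hptwise g x
    simp only [hpt]
    exact key' g hgcont.measurable
  have hneg : (∫⁻ x : Fin D → ℝ, ENNReal.ofReal (-(G (x l - f l x) * P x)))
      = ∫⁻ ε, ENNReal.ofReal (-g ε) := by
    have hpt : ∀ x : Fin D → ℝ, ENNReal.ofReal (-(G (x l - f l x) * P x))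
        = ENNReal.ofReal (-g (x l - f l x)) *
          ∏ i ∈ Finset.univ.erase l, ENNReal.ofReal (p i (x i - f i x)) := by
      intro x
      rw [hPhi x, ← neg_mul]
      exact hptwise (fun ε => -g ε) x
    simp only [hpt]
    exact key' (fun ε => -g ε) hgcont.neg.measurable
  calc ∫ x : Fin D → ℝ, Dg l x * P x
      = ∫ x : Fin D → ℝ, G (x l - f l x) * P x := by simp only [part1, ← hGdef]
    _ = ENNReal.toReal (∫⁻ x : Fin D → ℝ, ENNReal.ofReal (G (x l - f l x) * P x))
        - ENNReal.toReal (∫⁻ x : Fin D → ℝ, ENNReal.ofReal (-(G (x l - f l x) * P x))) :=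
      integral_eq_lintegral_pos_part_sub_lintegral_neg_part hΦint
    _ = ENNReal.toReal (∫⁻ ε, ENNReal.ofReal (g ε))
        - ENNReal.toReal (∫⁻ ε, ENNReal.ofReal (-g ε)) := by rw [hpos, hneg]
    _ = ∫ ε, g ε := (integral_eq_lintegral_pos_part_sub_lintegral_neg_part hint).symm
end
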